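/- arXiv:0704.1969 — 3 statements merged into one kernel-verified Lean document; each statement's English description precedes it below -/
import Mathlib

section
/- Let t be a standard Young-Fibonacci tableau of size n. Then the set of linear extensions of the canonical poset P_t is exactly the interval [min(t), max(t)] of the weak order on S_n: a permutation σ of {1,…,n} is a linear extension of P_t if and only if min(t) ≤ σ ≤ max(t) in the weak order. -/
/-- A snakeshape: a composition all of whose parts equal 1 or 2, recorded as the
list of column heights, read left to right. -/
def IsSnakeshape (u : List ℕ) : Prop := ∀ p ∈ u, p = 1 ∨ p = 2

/-- The shape (list of column heights, left to right) of a tableau given as a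
list of columns, each column listed top to bottom. -/
def shapeOf (t : List (List ℕ)) : List ℕ := t.map List.length

/-- `t` is a standard Young–Fibonacci tableau of size `n`: columns are listed left
to right, each column top to bottom; every column has height 1 or 2; in each
column the top entry exceeds the bottom entry; every topmost entry exceeds all
entries in columns strictly to its right; and the entries are exactly `1,…,n`. -/
def IsYFT (n : ℕ) (t : List (List ℕ)) : Prop :=
  (∀ c ∈ t, c.length = 1 ∨ c.length = 2) ∧
  (∀ c ∈ t, List.Chain' (fun a b => b < a) c) ∧
  (∀ i j : ℕ, i < j → j < t.length →
    ∀ a ∈ (t.getD i []).head?, ∀ x ∈ t.getD j [], x < a) ∧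
  (t.flatten).Perm (List.range' 1 n)

/-- Auxiliary, fuelled version of the Young–Fibonacci insertion: reading the word
from right to left, each letter read gets matched to the largest not-yet-matched
letter occurring strictly to its left which exceeds it (forming a height-2 column,
larger letter on top), and otherwise stays single (a height-1 column); columns are
listed in the order in which their status was settled. -/
def insertColsAux : ℕ → List ℕ → List (List ℕ)
  | 0, _ => []
  | _, [] => []
  | fuel+1, w =>
    let x := w.getLast!
    let w' := w.dropLast
    match (w'.filter (fun y => decide (x < y))).max? with
    | none => [x] :: insertColsAux fuel w'
    | some m => [m, x] :: insertColsAux fuel (w'.erase m)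

/-- The Young–Fibonacci insertion tableau of a word. -/
def insertCols (w : List ℕ) : List (List ℕ) := insertColsAux w.length w

/-- The word `σ(1)⋯σ(n)` of a permutation of `{1,…,n}` (letters `1,…,n`). -/
def permWord {n : ℕ} (σ : Equiv.Perm (Fin n)) : List ℕ :=
  List.ofFn (fun i => (σ i : ℕ) + 1)

/-- min(t): read the columns right to left, each column top to bottom. -/
def minWord (t : List (List ℕ)) : List ℕ := t.reverse.flatten

/-- max(t): the top row left to right, then the bottom row right to left. -/
def maxWord (t : List (List ℕ)) : List ℕ :=
  (t.filterMap fun c => if c.length = 2 then c.head? else none) ++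
    (t.filterMap List.getLast?).reverse

/-- Number of inversions of a word: pairs of positions `p < q` with `w p > w q`. -/
def invCount (w : List ℕ) : ℕ :=
  ((Finset.range w.length ×ˢ Finset.range w.length).filter
    (fun p => p.1 < p.2 ∧ w.getD p.2 0 < w.getD p.1 0)).card

/-- `w'` is obtained from `w` by swapping two adjacent letters `x < y` (in this
order in `w`), thus creating exactly one more inversion. -/
def AdjSwap (w w' : List ℕ) : Prop :=
  ∃ l r : List ℕ, ∃ x y : ℕ, x < y ∧ w = l ++ x :: y :: r ∧ w' = l ++ y :: x :: r

/-- The (right) weak order on words. -/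
def WordWeakLe (w w' : List ℕ) : Prop := Relation.ReflTransGen AdjSwap w w'

/-- `Shift t t'`: `t'` is obtained from `t` by shifting one entry. Columns are
listed top to bottom, so `[b, a]` is the column with top `b`, bottom `a`. -/
inductive Shift : List (List ℕ) → List (List ℕ) → Prop
  /-- the bottom entry `a` of a height-2 column bumps up the single entry `c` of
  the column on its left; the top entry `b` falls down. -/
  | bump2 (l r : List (List ℕ)) (c b a : ℕ) :
      Shift (l ++ [[c], [b, a]] ++ r) (l ++ [[c, a], [b]] ++ r)
  /-- the entry `a` of a height-1 column bumps up the single entry `c` of the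
  column on its left; its own column disappears. -/
  | bump1 (l r : List (List ℕ)) (c a : ℕ) :
      Shift (l ++ [[c], [a]] ++ r) (l ++ [[c, a]] ++ r)
  /-- `a < c` replaces `c` at the bottom of the height-2 column on its left, and
  `c < b` takes the former place of `a`. -/
  | exch (l r : List (List ℕ)) (d c b a : ℕ) (h1 : a < c) (h2 : c < b) :
      Shift (l ++ [[d, c], [b, a]] ++ r) (l ++ [[d, a], [b, c]] ++ r)
  /-- `a < c` replaces `c` at the bottom of the height-2 column on its left; since
  `b < c`, `c` becomes a new height-1 column in between and `b` falls down. -/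
  | split2 (l r : List (List ℕ)) (d c b a : ℕ) (h1 : a < c) (h2 : b < c) :
      Shift (l ++ [[d, c], [b, a]] ++ r) (l ++ [[d, a], [c], [b]] ++ r)
  /-- `a < c` replaces `c` at the bottom of the height-2 column on its left; `c`
  becomes a new height-1 column and the height-1 column of `a` disappears. -/
  | split1 (l r : List (List ℕ)) (d c a : ℕ) (h1 : a < c) :
      Shift (l ++ [[d, c], [a]] ++ r) (l ++ [[d, a], [c]] ++ r)

/-- The bottom row of a tableau, read left to right: the bottom entries of the
height-2 columns together with the entries of the height-1 columns. -/
def bottomRow (t : List (List ℕ)) : List ℕ := t.filterMap List.getLast?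

/-- Generating relations of the canonical poset `P_t`: `canoGen t x y` means `x`
is covered... i.e. `x <_P y` is a generating relation: consecutive bottom-row
entries read right to left (rightmost lowest), and each top entry of a height-2
column below the corresponding bottom entry. -/
def canoGen (t : List (List ℕ)) (x y : ℕ) : Prop :=
  (∃ i : ℕ, i + 1 < (bottomRow t).length ∧
    (bottomRow t).getD (i + 1) 0 = x ∧ (bottomRow t).getD i 0 = y) ∨
  (∃ c ∈ t, c.length = 2 ∧ c.head? = some x ∧ c.getLast? = some y)

/-- `w` is (the word of) a linear extension of the canonical poset `P_t`. -/
def IsLinExt (t : List (List ℕ)) (w : List ℕ) : Prop :=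
  ∀ x y : ℕ, Relation.ReflTransGen (canoGen t) x y → x ≠ y →
    w.idxOf x < w.idxOf y

/-- The set of inversions of a word: pairs `(j, i)` with `i < j` such that `j`
occurs before `i`. -/
def InvSet (w : List ℕ) : Set (ℕ × ℕ) :=
  {p | p.2 < p.1 ∧ p.1 ∈ w ∧ p.2 ∈ w ∧ w.idxOf p.1 < w.idxOf p.2}

/-- The set of non-inversions of a word: pairs `(i, j)` with `i < j` such that `i`
occurs before `j`. -/
def NonInvSet (w : List ℕ) : Set (ℕ × ℕ) :=
  {p | p.1 < p.2 ∧ p.1 ∈ w ∧ p.2 ∈ w ∧ w.idxOf p.1 < w.idxOf p.2}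

/-- The row canonical tableau of shape `u` (size `n`): topmost cells are labelled
`n, n-1, …` from left to right, bottom cells of height-2 columns are labelled
`1, 2, …` from left to right. -/
def rTcols (n : ℕ) (u : List ℕ) : List (List ℕ) :=
  (List.range u.length).map (fun i =>
    if u.getD i 0 = 2 then [n - i, (u.take i).count 2 + 1] else [n - i])

/-- The column canonical tableau of shape `u`: cells are labelled `1, 2, …` taking
columns right to left, in each column the bottom cell before the top cell. -/
def cTcols (u : List ℕ) : List (List ℕ) :=
  (List.range u.length).map (fun i =>
    let s := u.sum - (u.take (i + 1)).sum
    if u.getD i 0 = 2 then [s + 2, s + 1] else [s + 1])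

/-- `t` is a semistandard Young–Fibonacci tableau of shape `u`: entries are
positive integers, in each column the top entry strictly exceeds the bottom one,
and every topmost entry is `≥` all entries in columns strictly to its right. -/
def IsSSYFT (u : List ℕ) (t : List (List ℕ)) : Prop :=
  shapeOf t = u ∧
  (∀ c ∈ t, List.Chain' (fun a b => b < a) c) ∧
  (∀ i j : ℕ, i < j → j < t.length →
    ∀ a ∈ (t.getD i []).head?, ∀ x ∈ t.getD j [], x ≤ a) ∧
  (∀ x ∈ t.flatten, 1 ≤ x)

/-- `t` has content `v`: for each `i`, `t` has exactly `v_i` entries equal to `i`.-/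
def ContentIs (v : List ℕ) (t : List (List ℕ)) : Prop :=
  ∀ i : ℕ, t.flatten.count (i + 1) = v.getD i 0

/-- The Young–Fibonacci number `N_{u,v}`: the number of semistandard
Young–Fibonacci tableaux of shape `u` and content `v`. -/
noncomputable def YFNumber (u v : List ℕ) : ℕ :=
  Nat.card {t : List (List ℕ) // IsSSYFT u t ∧ ContentIs v t}

/-- The multiset (as a list indexed by positions) `v^{1-}`: delete a part equal
to 1, or decrease a larger part by 1. -/
def vMinus (v : List ℕ) : List (List ℕ) :=
  (List.range v.length).map (fun p =>
    if v.getD p 0 = 1 then v.eraseIdx p else v.set p (v.getD p 0 - 1))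

/-- The list of snakeshapes covering `u` in the Young–Fibonacci lattice:
(i) prepend a part 1; (ii) replace the leftmost part equal to 1 by a 2;
(iii) if `u` starts with `k ≥ 1` parts equal to 2, insert a part 1 just after the
`i`-th part, `1 ≤ i ≤ k`. -/
def coversList (u : List ℕ) : List (List ℕ) :=
  [1 :: u] ++
    (if (u.takeWhile (fun p => decide (p = 2))).length < u.length then
      [u.take (u.takeWhile (fun p => decide (p = 2))).length ++
        2 :: u.drop ((u.takeWhile (fun p => decide (p = 2))).length + 1)]
    else []) ++
    ((List.range (u.takeWhile (fun p => decide (p = 2))).length).map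
      (fun i => u.insertIdx (i + 1) 1))

/-- Okada's analogue of the Kostka numbers (fuelled implementation of the
defining recurrences; `v.length` is enough fuel). -/
def OkadaKAux : ℕ → List ℕ → List ℕ → ℕ
  | _, [], [] => 1
  | fuel+1, 1 :: u, 1 :: v => OkadaKAux fuel u v
  | fuel+1, 2 :: u, 2 :: v => OkadaKAux fuel u v
  | _+1, 1 :: _, 2 :: _ => 0
  | fuel+1, 2 :: u, 1 :: v => ((coversList u).map (fun w => OkadaKAux fuel w v)).sum
  | _, _, _ => 0

/-- Okada's analogue `K_{u,v}` of the Kostka numbers, determined by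
`K_{∅,∅} = 1`, `K_{1u,1v} = K_{u,v}`, `K_{2u,2v} = K_{u,v}`, `K_{1u,2v} = 0` and
`K_{2u,1v} = Σ_{w covers u} K_{w,v}`. -/
def OkadaK (u v : List ℕ) : ℕ := OkadaKAux v.length u v

/-- The cells of a snakeshape `u`: pairs `(i, r)` with `i` the (0-based) column
index and `r = 0` for the bottom cell, `r = 1` for the top cell. -/
def cellsFinset (u : List ℕ) : Finset (ℕ × ℕ) :=
  (Finset.range u.length ×ˢ Finset.range 2).filter (fun p => p.2 < u.getD p.1 0)

/-- Generating relations of the poset `P_u` on the cells of `u`: the bottom-row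
cells read right to left form a chain (rightmost lowest), and the top cell of
each height-2 column lies strictly below its bottom cell. -/
def cellGen (u : List ℕ) (c c' : ℕ × ℕ) : Prop :=
  (∃ i : ℕ, i + 1 < u.length ∧ c = (i + 1, 0) ∧ c' = (i, 0)) ∨
  (∃ i : ℕ, i < u.length ∧ u.getD i 0 = 2 ∧ c = (i, 1) ∧ c' = (i, 0))

/-- The order relation of the poset `P_u`. -/
def cellLe (u : List ℕ) (c c' : ℕ × ℕ) : Prop :=
  Relation.ReflTransGen (cellGen u) c c'
section YFProofs

namespace YF

open List

/-- `x` occurs strictly before `y` in `w`. -/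
def Before (w : List ℕ) (x y : ℕ) : Prop :=
  x ∈ w ∧ y ∈ w ∧ w.idxOf x < w.idxOf y

lemma before_asymm {w : List ℕ} {x y : ℕ} (h1 : Before w x y) (h2 : Before w y x) : False :=
  absurd h2.2.2 (Nat.not_lt.2 (Nat.le_of_lt h1.2.2))

lemma before_irrefl {w : List ℕ} {x : ℕ} (h : Before w x x) : False :=
  Nat.lt_irrefl _ h.2.2

lemma before_total {w : List ℕ} {x y : ℕ} (hx : x ∈ w) (hy : y ∈ w) (hne : x ≠ y) :
    Before w x y ∨ Before w y x := by
  rcases Nat.lt_trichotomy (w.idxOf x) (w.idxOf y) with h | h | h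
  · exact Or.inl ⟨hx, hy, h⟩
  · exfalso
    have hx' : w.idxOf x < w.length := idxOf_lt_length_iff.2 hx
    have hy' : w.idxOf y < w.length := idxOf_lt_length_iff.2 hy
    have e1 : w[w.idxOf x]? = some x := by
      rw [getElem?_eq_getElem hx', getElem_idxOf hx']
    have e2 : w[w.idxOf y]? = some y := by
      rw [getElem?_eq_getElem hy', getElem_idxOf hy']
    rw [h, e2] at e1
    exact hne (Option.some.inj e1).symm
  · exact Or.inr ⟨hy, hx, h⟩

lemma before_of_split {l r : List ℕ} {x y : ℕ} (hnd : (l ++ r).Nodup)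
    (hx : x ∈ l) (hy : y ∈ r) : Before (l ++ r) x y := by
  have hyl : y ∉ l := fun h => (disjoint_of_nodup_append hnd) h hy
  refine ⟨mem_append.2 (Or.inl hx), mem_append.2 (Or.inr hy), ?_⟩
  rw [idxOf_append_of_mem hx, idxOf_append_of_notMem hyl]
  calc l.idxOf x < l.length := idxOf_lt_length_iff.2 hx
  _ ≤ _ := Nat.le_add_right _ _

lemma before_of_eq {w l r : List ℕ} {x y : ℕ} (hw : w = l ++ r) (hnd : w.Nodup)
    (hx : x ∈ l) (hy : y ∈ r) : Before w x y := by
  subst hw; exact before_of_split hnd hx hy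

section Swap

variable {l r : List ℕ} {x y : ℕ}

lemma idx_x (hnd : (l ++ x :: y :: r).Nodup) :
    (l ++ x :: y :: r).idxOf x = l.length := by
  have hx : x ∉ l := fun h => (disjoint_of_nodup_append hnd) h (by simp)
  rw [idxOf_append_of_notMem hx, idxOf_cons_self]
  omega

lemma idx_y (hnd : (l ++ x :: y :: r).Nodup) :
    (l ++ x :: y :: r).idxOf y = l.length + 1 := by
  have hy : y ∉ l := fun h => (disjoint_of_nodup_append hnd) h (by simp)
  have hxy : x ≠ y := by
    have h2 := (nodup_append.1 hnd).2.1
    have := (nodup_cons.1 h2).1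
    exact fun h => this (by rw [h]; exact mem_cons_self)
  rw [idxOf_append_of_notMem hy, idxOf_cons_ne _ hxy, idxOf_cons_self]

lemma idx_ne_x {z : ℕ} (hnd : (l ++ x :: y :: r).Nodup) (hz : z ∈ l ++ x :: y :: r)
    (hne : z ≠ x) : (l ++ x :: y :: r).idxOf z ≠ l.length := by
  intro h
  have h1 : (l ++ x :: y :: r).idxOf z < (l ++ x :: y :: r).length :=
    idxOf_lt_length_iff.2 hz
  have h2 : (l ++ x :: y :: r)[(l ++ x :: y :: r).idxOf z]? = some z := by
    rw [getElem?_eq_getElem h1, getElem_idxOf h1]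
  have h3 : (l ++ x :: y :: r)[l.length]? = some x := by
    have hl : l.length < (l ++ x :: y :: r).length := by simp
    rw [getElem?_eq_getElem hl, getElem_append_right (Nat.le_refl _)]
    simp
  rw [h, h3] at h2
  exact hne (Option.some.inj h2).symm

lemma idx_ne_y {z : ℕ} (hnd : (l ++ x :: y :: r).Nodup) (hz : z ∈ l ++ x :: y :: r)
    (hne : z ≠ y) : (l ++ x :: y :: r).idxOf z ≠ l.length + 1 := by
  intro h
  have h1 : (l ++ x :: y :: r).idxOf z < (l ++ x :: y :: r).length :=
    idxOf_lt_length_iff.2 hz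
  have h2 : (l ++ x :: y :: r)[(l ++ x :: y :: r).idxOf z]? = some z := by
    rw [getElem?_eq_getElem h1, getElem_idxOf h1]
  have h3 : (l ++ x :: y :: r)[l.length + 1]? = some y := by
    have hl : l.length + 1 < (l ++ x :: y :: r).length := by simp
    rw [getElem?_eq_getElem hl, getElem_append_right (by omega)]
    simp [show l.length + 1 - l.length = 1 from by omega]
  rw [h, h3] at h2
  exact hne (Option.some.inj h2).symm

lemma idx_swap_eq {z : ℕ} (hz : z ∈ l ++ x :: y :: r) (hzx : z ≠ x) (hzy : z ≠ y) :
    (l ++ y :: x :: r).idxOf z = (l ++ x :: y :: r).idxOf z := by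
  rcases mem_append.1 hz with h | h
  · rw [idxOf_append_of_mem h, idxOf_append_of_mem h]
  · simp only [mem_cons] at h
    rcases h with h | h | h
    · exact absurd h hzx
    · exact absurd h hzy
    · by_cases hl : z ∈ l
      · rw [idxOf_append_of_mem hl, idxOf_append_of_mem hl]
      · rw [idxOf_append_of_notMem hl, idxOf_append_of_notMem hl,
          idxOf_cons_ne _ (Ne.symm hzy), idxOf_cons_ne _ (Ne.symm hzx),
          idxOf_cons_ne _ (Ne.symm hzx), idxOf_cons_ne _ (Ne.symm hzy)]

lemma nodup_swap (hnd : (l ++ x :: y :: r).Nodup) : (l ++ y :: x :: r).Nodup :=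
  ((Perm.append_left l (Perm.swap x y r)).symm).nodup hnd

lemma mem_swap {z : ℕ} (hz : z ∈ l ++ x :: y :: r) : z ∈ l ++ y :: x :: r := by
  simp only [mem_append, mem_cons] at hz ⊢
  tauto

/-- Swapping two adjacent letters preserves relative order of every other pair. -/
lemma before_swap {q p : ℕ} (hnd : (l ++ x :: y :: r).Nodup)
    (hne : ¬(q = x ∧ p = y)) (hb : Before (l ++ x :: y :: r) q p) :
    Before (l ++ y :: x :: r) q p := by
  obtain ⟨hq, hp, hqp⟩ := hb
  have hnd' : (l ++ y :: x :: r).Nodup := nodup_swap hnd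
  refine ⟨mem_swap hq, mem_swap hp, ?_⟩
  have hqp' : q ≠ p := by
    intro h; rw [h] at hqp; exact Nat.lt_irrefl _ hqp
  have hix : (l ++ x :: y :: r).idxOf x = l.length := idx_x hnd
  have hiy : (l ++ x :: y :: r).idxOf y = l.length + 1 := idx_y hnd
  have hix' : (l ++ y :: x :: r).idxOf y = l.length := idx_x hnd'
  have hiy' : (l ++ y :: x :: r).idxOf x = l.length + 1 := idx_y hnd'
  by_cases hqx : q = x
  · subst hqx
    have hpy : p ≠ y := fun h => hne ⟨rfl, h⟩
    have hpx : p ≠ q := Ne.symm hqp'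
    rw [hiy']
    rw [idx_swap_eq hp hpx hpy]
    have h1 := idx_ne_x hnd hp hpx
    have h2 := idx_ne_y hnd hp hpy
    omega
  · by_cases hqy : q = y
    · subst hqy
      have hpx : p ≠ x := by
        intro h; subst h
        rw [hix, hiy] at hqp; omega
      have hpy : p ≠ q := Ne.symm hqp'
      rw [hix', idx_swap_eq hp hpx hpy]
      have h2 := idx_ne_y hnd hp hpy
      rw [hiy] at hqp
      omega
    · -- q ∉ {x, y}
      rw [idx_swap_eq hq hqx hqy]
      by_cases hpx : p = x
      · subst hpx
        rw [hiy']
        rw [hix] at hqp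
        omega
      · by_cases hpy : p = y
        · subst hpy
          rw [hix']
          rw [hiy] at hqp
          have := idx_ne_x hnd hq hqx
          omega
        · rw [idx_swap_eq hp hpx hpy]
          exact hqp

end Swap

lemma adjSwap_perm {w w' : List ℕ} (h : AdjSwap w w') : w.Perm w' := by
  obtain ⟨l, r, x, y, _, hw, hw'⟩ := h
  rw [hw, hw']
  exact Perm.append_left l (Perm.swap y x r)

/-- A single adjacent swap preserves all inversions. -/
lemma adjSwap_before {w w' : List ℕ} (hnd : w.Nodup) (h : AdjSwap w w')
    {q p : ℕ} (hpq : p < q) (hb : Before w q p) : Before w' q p := by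
  obtain ⟨l, r, x, y, hxy, hw, hw'⟩ := h
  subst hw; subst hw'
  refine before_swap hnd (fun hc => ?_) hb
  obtain ⟨h1, h2⟩ := hc
  subst h1; subst h2
  omega

lemma weakle_perm_before {u v : List ℕ} (hnd : u.Nodup) (h : WordWeakLe u v) :
    u.Perm v ∧ ∀ q p : ℕ, p < q → Before u q p → Before v q p := by
  induction h with
  | refl => exact ⟨Perm.refl _, fun _ _ _ hb => hb⟩
  | tail _ hstep ih =>
    obtain ⟨hperm, hsub⟩ := ih
    refine ⟨hperm.trans (adjSwap_perm hstep), fun q p hpq hb => ?_⟩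
    exact adjSwap_before (hperm.nodup hnd) hstep hpq (hsub q p hpq hb)

/-- If `u ≠ v` are permutations of each other, some adjacent pair of `u` occurs
in the opposite order in `v`. -/
lemma exists_desc {u v : List ℕ} (h : u.Perm v) (hnd : v.Nodup) (hne : u ≠ v) :
    ∃ l x y r, u = l ++ x :: y :: r ∧ Before v y x := by
  induction u generalizing v with
  | nil =>
    exact absurd h.nil_eq hne
  | cons a u2 ih =>
    have hndu : (a :: u2).Nodup := h.symm.nodup hnd
    cases v with
    | nil => exact absurd h.eq_nil hne
    | cons b v2 =>
      by_cases hab : a = b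
      · subst hab
        have h2 : u2.Perm v2 := h.cons_inv
        have hne2 : u2 ≠ v2 := fun e => hne (by rw [e])
        obtain ⟨l, x, y, r, hu, hb⟩ := ih h2 (nodup_cons.1 hnd).2 hne2
        refine ⟨a :: l, x, y, r, by rw [hu]; rfl, ?_⟩
        obtain ⟨hy, hx, hidx⟩ := hb
        have hbv : a ∉ v2 := (nodup_cons.1 hnd).1
        have hya : y ≠ a := fun e => hbv (e ▸ hy)
        have hxa : x ≠ a := fun e => hbv (e ▸ hx)
        refine ⟨mem_cons_of_mem _ hy, mem_cons_of_mem _ hx, ?_⟩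
        rw [idxOf_cons_ne _ (Ne.symm hya), idxOf_cons_ne _ (Ne.symm hxa)]
        omega
      · -- a ≠ b; b occurs in u2, take its predecessor d in a :: u2
        have hbu : b ∈ u2 := by
          have : b ∈ a :: u2 := h.symm.subset (mem_cons_self)
          rcases mem_cons.1 this with e | e
          · exact absurd e.symm hab
          · exact e
        obtain ⟨l1, r1, hu2⟩ := append_of_mem hbu
        rcases eq_nil_or_concat (a :: l1) with hnil | ⟨l', d, hl'⟩
        · exact absurd hnil (by simp)
        · have hu : a :: u2 = l' ++ d :: b :: r1 := by
            rw [hu2, ← cons_append, hl', concat_eq_append]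
            simp
          have hdb : d ≠ b := by
            have : (l' ++ d :: b :: r1).Nodup := hu ▸ hndu
            have h2 := (nodup_append.1 this).2.1
            exact fun e => (nodup_cons.1 h2).1 (e ▸ mem_cons_self)
          have hdmem : d ∈ b :: v2 := by
            refine h.subset ?_
            rw [hu]
            simp
          refine ⟨l', d, b, r1, hu, ?_, hdmem, ?_⟩
          · exact mem_cons_self
          · rw [idxOf_cons_self]
            rcases mem_cons.1 hdmem with e | e
            · exact absurd e hdb
            · rw [idxOf_cons_ne _ (Ne.symm hdb)]
              omega

/-- The finite set of inversions of a word. -/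
def invP (w : List ℕ) : Finset (ℕ × ℕ) :=
  (w.toFinset ×ˢ w.toFinset).filter
    (fun p => p.2 < p.1 ∧ w.idxOf p.1 < w.idxOf p.2)

lemma mem_invP {w : List ℕ} {p : ℕ × ℕ} :
    p ∈ invP w ↔ p.2 < p.1 ∧ Before w p.1 p.2 := by
  simp only [invP, Finset.mem_filter, Finset.mem_product, List.mem_toFinset, Before]
  tauto

lemma step_lemma {u v : List ℕ} (hperm : u.Perm v) (hnd : u.Nodup)
    (hsub : ∀ q p : ℕ, p < q → Before u q p → Before v q p) (hne : u ≠ v) :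
    ∃ u', AdjSwap u u' ∧ u'.Perm v ∧ u'.Nodup ∧
      (∀ q p : ℕ, p < q → Before u' q p → Before v q p) ∧
      (invP u).card < (invP u').card ∧ invP u' ⊆ invP v := by
  have hndv : v.Nodup := hperm.nodup hnd
  obtain ⟨l, x, y, r, hu, hbyx⟩ := exists_desc hperm hndv hne
  subst hu
  have hbxy : Before (l ++ x :: y :: r) x y := by
    refine before_of_eq (l := l ++ [x]) (r := y :: r) (by simp) hnd (by simp) (by simp)
  have hxy : x < y := by
    rcases Nat.lt_trichotomy x y with h | h | h
    · exact h
    · exact absurd (h ▸ hbyx) before_irrefl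
    · exact absurd (hsub x y h hbxy) (fun hc => before_asymm hc hbyx)
  refine ⟨l ++ y :: x :: r, ⟨l, r, x, y, hxy, rfl, rfl⟩, ?_, nodup_swap hnd, ?_, ?_, ?_⟩
  · exact (Perm.append_left l (Perm.swap x y r)).trans hperm
  · intro q p hpq hb
    by_cases hc : q = y ∧ p = x
    · obtain ⟨rfl, rfl⟩ := hc
      exact hbyx
    · exact hsub q p hpq (before_swap (nodup_swap hnd) hc hb)
  · -- card increases
    have hss : invP (l ++ x :: y :: r) ⊂ invP (l ++ y :: x :: r) := by
      constructor
      · intro p hp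
        rw [mem_invP] at hp ⊢
        refine ⟨hp.1, before_swap hnd (fun hc => ?_) hp.2⟩
        obtain ⟨h1, h2⟩ := hc
        rw [h1, h2] at hp
        omega
      · intro hle
        have hyx : (y, x) ∈ invP (l ++ y :: x :: r) := by
          rw [mem_invP]
          exact ⟨hxy, before_of_eq (l := l ++ [y]) (r := x :: r) (by simp)
            (nodup_swap hnd) (by simp) (by simp)⟩
        have := hle hyx
        rw [mem_invP] at this
        exact before_asymm hbxy this.2
    exact Finset.card_lt_card hss
  · intro p hp
    rw [mem_invP] at hp ⊢
    by_cases hc : p.1 = y ∧ p.2 = x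
    · exact ⟨hp.1, hc.1 ▸ hc.2 ▸ hbyx⟩
    · refine ⟨hp.1, hsub p.1 p.2 hp.1 (before_swap (nodup_swap hnd) hc hp.2)⟩

lemma invsub_weakle {v : List ℕ} :
    ∀ k : ℕ, ∀ u : List ℕ, u.Perm v → u.Nodup →
      (∀ q p : ℕ, p < q → Before u q p → Before v q p) →
      (invP v).card - (invP u).card ≤ k → WordWeakLe u v := by
  intro k
  induction k with
  | zero =>
    intro u hperm hnd hsub hk
    by_cases hne : u = v
    · subst hne; exact Relation.ReflTransGen.refl
    · exfalso
      obtain ⟨u', _, _, _, _, hlt, hsubv⟩ := step_lemma hperm hnd hsub hne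
      have := Finset.card_le_card hsubv
      omega
  | succ k ih =>
    intro u hperm hnd hsub hk
    by_cases hne : u = v
    · subst hne; exact Relation.ReflTransGen.refl
    · obtain ⟨u', hadj, hperm', hnd', hsub', hlt, hsubv⟩ := step_lemma hperm hnd hsub hne
      have hcard := Finset.card_le_card hsubv
      exact Relation.ReflTransGen.head hadj (ih u' hperm' hnd' hsub' (by omega))


open List

/-- The explicit form of the canonical partial order of `t`. -/
def LeP (t : List (List ℕ)) (x y : ℕ) : Prop :=
  x = y ∨ ∃ i j : ℕ, j ≤ i ∧ i < t.length ∧ x ∈ t.getD i [] ∧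
    (t.getD j []).getLast? = some y

variable {t : List (List ℕ)}

lemma col_ne_nil (hlen : ∀ c ∈ t, c.length = 1 ∨ c.length = 2) {c : List ℕ}
    (hc : c ∈ t) : c ≠ [] := by
  intro h
  rcases hlen c hc with h1 | h1 <;> rw [h] at h1 <;> simp at h1

lemma col_shape (hlen : ∀ c ∈ t, c.length = 1 ∨ c.length = 2)
    (hch : ∀ c ∈ t, List.Chain' (fun a b => b < a) c) {c : List ℕ} (hc : c ∈ t) :
    (∃ a, c = [a]) ∨ (∃ b a, a < b ∧ c = [b, a]) := by
  rcases c with _ | ⟨p, c2⟩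
  · exact absurd rfl (col_ne_nil hlen hc)
  rcases c2 with _ | ⟨q, c3⟩
  · exact Or.inl ⟨p, rfl⟩
  rcases c3 with _ | ⟨s, c4⟩
  · have h2 := hch _ hc
    rw [Chain', isChain_pair] at h2
    exact Or.inr ⟨p, q, h2, rfl⟩
  · rcases hlen _ hc with h | h <;> simp at h

lemma col_mem {i : ℕ} (hi : i < t.length) : t.getD i [] ∈ t := by
  rw [List.getD_eq_getElem _ _ hi]; exact List.getElem_mem hi

lemma mem_flatten_of_col {i : ℕ} {x : ℕ} (hi : i < t.length) (hx : x ∈ t.getD i []) :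
    x ∈ t.flatten := mem_flatten.2 ⟨_, col_mem hi, hx⟩

lemma getElem_mem_take {i k : ℕ} (hik : i < k) (hi : i < t.length) :
    t[i] ∈ t.take k := by
  have hlt : i < (t.take k).length := by
    rw [List.length_take]; omega
  have h := List.getElem_mem hlt
  rwa [List.getElem_take] at h

lemma getElem_mem_drop {k j : ℕ} (hkj : k ≤ j) (hj : j < t.length) :
    t[j] ∈ t.drop k := by
  obtain ⟨m, rfl⟩ := Nat.exists_eq_add_of_le hkj
  have hlt : m < (t.drop k).length := by
    rw [List.length_drop]; omega
  have h := List.getElem_mem hlt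
  rwa [List.getElem_drop] at h

lemma col_disjoint (hnd : t.flatten.Nodup) {i j x : ℕ} (hij : i < j)
    (hj : j < t.length) (hxi : x ∈ t.getD i []) (hxj : x ∈ t.getD j []) : False := by
  have hi : i < t.length := lt_trans hij hj
  have hsplit : t.flatten = (t.take (i+1)).flatten ++ (t.drop (i+1)).flatten := by
    rw [← List.flatten_append, List.take_append_drop]
  rw [hsplit] at hnd
  have hdisj := disjoint_of_nodup_append hnd
  rw [List.getD_eq_getElem _ _ hi] at hxi
  rw [List.getD_eq_getElem _ _ hj] at hxj
  exact hdisj (mem_flatten.2 ⟨_, getElem_mem_take (Nat.lt_succ_self i) hi, hxi⟩)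
    (mem_flatten.2 ⟨_, getElem_mem_drop hij hj, hxj⟩)

lemma col_unique (hnd : t.flatten.Nodup) {i j x : ℕ} (hi : i < t.length)
    (hj : j < t.length) (hxi : x ∈ t.getD i []) (hxj : x ∈ t.getD j []) : i = j := by
  rcases Nat.lt_trichotomy i j with h | h | h
  · exact absurd (col_disjoint hnd h hj hxi hxj) not_false
  · exact h
  · exact absurd (col_disjoint hnd h hi hxj hxi) not_false

lemma bottomRow_eq : ∀ (t : List (List ℕ)), (∀ c ∈ t, c ≠ []) →
    bottomRow t = t.map (fun c => c.getLast?.getD 0) := by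
  intro t
  induction t with
  | nil => intro _; rfl
  | cons c t ih =>
    intro h
    have hc : c ≠ [] := h c (mem_cons_self)
    show List.filterMap _ _ = _
    rw [List.filterMap_cons, List.getLast?_eq_getLast hc]
    simp only [List.map_cons, List.getLast?_eq_getLast hc, Option.getD_some]
    exact congrArg _ (ih (fun c hc => h c (mem_cons_of_mem _ hc)))

lemma bottomRow_length (h : ∀ c ∈ t, c ≠ []) : (bottomRow t).length = t.length := by
  rw [bottomRow_eq t h, List.length_map]

lemma bottomRow_getD (h : ∀ c ∈ t, c ≠ []) {i : ℕ} (hi : i < t.length) :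
    (t.getD i []).getLast? = some ((bottomRow t).getD i 0) := by
  have hi' : i < (t.map (fun c => c.getLast?.getD 0)).length := by
    rw [List.length_map]; exact hi
  rw [bottomRow_eq t h, List.getD_eq_getElem _ _ hi', List.getElem_map,
    List.getD_eq_getElem _ _ hi]
  have hc : t[i] ≠ [] := h _ (List.getElem_mem hi)
  rw [List.getLast?_eq_getLast hc]
  simp

lemma mem_of_getLast?_eq {c : List ℕ} {y : ℕ} (h : c.getLast? = some y) : y ∈ c :=
  List.mem_of_mem_getLast? (Option.mem_def.2 h)

lemma mem_of_head?_eq {c : List ℕ} {y : ℕ} (h : c.head? = some y) : y ∈ c :=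
  List.mem_of_mem_head? (Option.mem_def.2 h)

lemma canoStep (hlen : ∀ c ∈ t, c.length = 1 ∨ c.length = 2)
    (hch : ∀ c ∈ t, List.Chain' (fun a b => b < a) c) (hnd : t.flatten.Nodup)
    {x b c : ℕ} (hx : LeP t x b) (hbc : canoGen t b c) : LeP t x c := by
  have hne : ∀ c ∈ t, c ≠ [] := fun c hc => col_ne_nil hlen hc
  rcases hbc with ⟨i, hi1, hb, hc⟩ | ⟨cc, hcc, hlen2, hhead, hlast⟩
  · rw [bottomRow_length hne] at hi1
    have hbi : (t.getD (i+1) []).getLast? = some b := by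
      rw [bottomRow_getD hne hi1, hb]
    have hci : (t.getD i []).getLast? = some c := by
      rw [bottomRow_getD hne (by omega : i < t.length), hc]
    rcases hx with rfl | ⟨i', j', hj', hi', hxmem, hlast'⟩
    · exact Or.inr ⟨i+1, i, by omega, hi1, mem_of_getLast?_eq hbi, hci⟩
    · have hbj' : b ∈ t.getD j' [] := mem_of_getLast?_eq hlast'
      have hbi1 : b ∈ t.getD (i+1) [] := mem_of_getLast?_eq hbi
      have hji : j' = i + 1 := col_unique hnd (lt_of_le_of_lt hj' hi') hi1 hbj' hbi1
      exact Or.inr ⟨i', i, by omega, hi', hxmem, hci⟩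
  · obtain ⟨k, hk, hck⟩ := getElem_of_mem hcc
    have hgetD : t.getD k [] = cc := by rw [List.getD_eq_getElem _ _ hk, hck]
    rcases hx with rfl | ⟨i', j', hj', hi', hxmem, hlast'⟩
    · refine Or.inr ⟨k, k, le_refl _, hk, ?_, by rw [hgetD]; exact hlast⟩
      rw [hgetD]
      exact mem_of_head?_eq hhead
    · exfalso
      have hbj' : b ∈ t.getD j' [] := mem_of_getLast?_eq hlast'
      have hbcc : b ∈ t.getD k [] := by rw [hgetD]; exact mem_of_head?_eq hhead
      have hj'k : j' = k := col_unique hnd (lt_of_le_of_lt hj' hi') hk hbj' hbcc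
      rw [hj'k, hgetD] at hlast'
      rcases col_shape hlen hch hcc with ⟨a, rfl⟩ | ⟨p, q, hpq, rfl⟩
      · simp at hlen2
      · simp at hhead hlast'
        omega

lemma rtg_lep (hlen : ∀ c ∈ t, c.length = 1 ∨ c.length = 2)
    (hch : ∀ c ∈ t, List.Chain' (fun a b => b < a) c) (hnd : t.flatten.Nodup)
    {x y : ℕ} (h : Relation.ReflTransGen (canoGen t) x y) : LeP t x y := by
  induction h with
  | refl => exact Or.inl rfl
  | tail _ hbc ih => exact canoStep hlen hch hnd ih hbc

lemma chainBR (hlen : ∀ c ∈ t, c.length = 1 ∨ c.length = 2) :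
    ∀ (k j : ℕ), j + k < t.length →
      Relation.ReflTransGen (canoGen t)
        ((bottomRow t).getD (j + k) 0) ((bottomRow t).getD j 0) := by
  have hne : ∀ c ∈ t, c ≠ [] := fun c hc => col_ne_nil hlen hc
  intro k
  induction k with
  | zero => intro j _; exact Relation.ReflTransGen.refl
  | succ k ih =>
    intro j hk
    refine Relation.ReflTransGen.head ?_ (ih j (by omega))
    left
    exact ⟨j + k, by rw [bottomRow_length hne]; omega, rfl, rfl⟩

lemma lep_rtg (hlen : ∀ c ∈ t, c.length = 1 ∨ c.length = 2)
    (hch : ∀ c ∈ t, List.Chain' (fun a b => b < a) c) (hnd : t.flatten.Nodup)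
    {x y : ℕ} (h : LeP t x y) : Relation.ReflTransGen (canoGen t) x y := by
  rcases h with rfl | ⟨i, j, hji, hi, hx, hlast⟩
  · exact Relation.ReflTransGen.refl
  have hne : ∀ c ∈ t, c ≠ [] := fun c hc => col_ne_nil hlen hc
  have hj : j < t.length := lt_of_le_of_lt hji hi
  have hylast : (t.getD j []).getLast? = some ((bottomRow t).getD j 0) :=
    bottomRow_getD hne hj
  have hy : y = (bottomRow t).getD j 0 := by
    rw [hlast] at hylast
    exact Option.some.inj hylast
  have hilast : (t.getD i []).getLast? = some ((bottomRow t).getD i 0) :=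
    bottomRow_getD hne hi
  have hchain : Relation.ReflTransGen (canoGen t)
      ((bottomRow t).getD i 0) ((bottomRow t).getD j 0) := by
    have := chainBR hlen (i - j) j (by omega)
    rwa [show j + (i - j) = i from by omega] at this
  rcases col_shape hlen hch (col_mem hi) with ⟨a, hcol⟩ | ⟨p, q, hpq, hcol⟩
  · have hxa : x = a := by rw [hcol] at hx; simpa using hx
    have hla : a = (bottomRow t).getD i 0 := by
      rw [hcol] at hilast
      simpa using hilast
    rw [hy, hxa, hla]
    exact hchain
  · have hlq : q = (bottomRow t).getD i 0 := by
      rw [hcol] at hilast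
      simpa using hilast
    rw [hcol] at hx
    rcases (by simpa using hx : x = p ∨ x = q) with rfl | rfl
    · refine Relation.ReflTransGen.head ?_ (hy ▸ hlq ▸ hchain)
      right
      refine ⟨t.getD i [], col_mem hi, ?_, ?_, ?_⟩ <;> rw [hcol] <;> simp
    · rw [hy, hlq]
      exact hchain

lemma minWord_perm : (minWord t).Perm t.flatten := (reverse_perm t).flatten

lemma minWord_nodup (hnd : t.flatten.Nodup) : (minWord t).Nodup :=
  (minWord_perm (t := t)).symm.nodup hnd

lemma min_before_cols (hnd : t.flatten.Nodup) {i j p q : ℕ} (hij : i < j)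
    (hj : j < t.length) (hp : p ∈ t.getD i []) (hq : q ∈ t.getD j []) :
    Before (minWord t) q p := by
  have hi : i < t.length := lt_trans hij hj
  have hsplit : minWord t =
      ((t.drop (i+1)).reverse).flatten ++ ((t.take (i+1)).reverse).flatten := by
    show t.reverse.flatten = _
    rw [← flatten_append, ← reverse_append, take_append_drop]
  refine before_of_eq hsplit (minWord_nodup hnd) ?_ ?_
  · rw [List.getD_eq_getElem _ _ hj] at hq
    exact mem_flatten.2 ⟨_, mem_reverse.2 (getElem_mem_drop hij hj), hq⟩
  · rw [List.getD_eq_getElem _ _ hi] at hp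
    exact mem_flatten.2 ⟨_, mem_reverse.2 (getElem_mem_take (Nat.lt_succ_self i) hi), hp⟩

lemma min_before_pair (hnd : t.flatten.Nodup) {i p q : ℕ} (hi : i < t.length)
    (hcol : t.getD i [] = [p, q]) : Before (minWord t) p q := by
  have hcol' : t[i] = [p, q] := by rw [← List.getD_eq_getElem t [] hi, hcol]
  have hsplit : minWord t =
      (((t.drop (i+1)).reverse).flatten ++ [p]) ++ (q :: ((t.take i).reverse).flatten) := by
    show t.reverse.flatten = _
    conv_lhs => rw [← take_append_drop i t, drop_eq_getElem_cons hi, hcol']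
    rw [reverse_append, reverse_cons, flatten_append, flatten_append]
    simp
  exact before_of_eq hsplit (minWord_nodup hnd) (by simp) (by simp)

lemma maxWord_perm : ∀ (t : List (List ℕ)), (∀ c ∈ t, c.length = 1 ∨ c.length = 2) →
    (maxWord t).Perm t.flatten := by
  intro t
  induction t with
  | nil => intro _; exact Perm.refl _
  | cons c t ih =>
    intro hlen
    have hct := ih (fun c hc => hlen c (mem_cons_of_mem _ hc))
    have hshape : (∃ a, c = [a]) ∨ ∃ p q, c = [p, q] := by
      rcases hlen c (mem_cons_self) with h1 | h1 <;>
        rcases c with _ | ⟨p, _ | ⟨q, _ | _⟩⟩ <;> simp_all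
    rcases hshape with ⟨a, rfl⟩ | ⟨p, q, rfl⟩
    · have he : maxWord ([a] :: t) = maxWord t ++ [a] := by
        simp [maxWord, List.filterMap_cons, List.append_assoc]
      rw [he, List.flatten_cons]
      exact perm_append_comm.trans (Perm.append_left [a] hct)
    · have he : maxWord ([p, q] :: t) = p :: (maxWord t ++ [q]) := by
        simp [maxWord, List.filterMap_cons, List.append_assoc]
      rw [he, List.flatten_cons]
      show p :: (maxWord t ++ [q]) ~ p :: (q :: t.flatten)
      exact Perm.cons p (perm_append_comm.trans (Perm.cons q hct))

lemma maxWord_nodup (hlen : ∀ c ∈ t, c.length = 1 ∨ c.length = 2)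
    (hnd : t.flatten.Nodup) : (maxWord t).Nodup :=
  (maxWord_perm t hlen).symm.nodup hnd

lemma mem_tops {c : List ℕ} {b : ℕ} (hc : c ∈ t) (h2 : c.length = 2)
    (hb : c.head? = some b) :
    b ∈ t.filterMap (fun c => if c.length = 2 then c.head? else none) := by
  exact List.mem_filterMap.2 ⟨c, hc, by rw [if_pos h2]; exact hb⟩

lemma mem_bots {c : List ℕ} {a : ℕ} (hc : c ∈ t) (ha : c.getLast? = some a) :
    a ∈ bottomRow t := List.mem_filterMap.2 ⟨c, hc, ha⟩

lemma max_before_top_bot (hlen : ∀ c ∈ t, c.length = 1 ∨ c.length = 2)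
    (hnd : t.flatten.Nodup) {x y : ℕ}
    (hx : x ∈ t.filterMap (fun c => if c.length = 2 then c.head? else none))
    (hy : y ∈ bottomRow t) : Before (maxWord t) x y := by
  exact before_of_eq rfl (maxWord_nodup hlen hnd) hx (mem_reverse.2 hy)

lemma max_before_bots (hlen : ∀ c ∈ t, c.length = 1 ∨ c.length = 2)
    (hnd : t.flatten.Nodup) {i j x y : ℕ} (hji : j < i) (hi : i < t.length)
    (hx : (t.getD i []).getLast? = some x) (hy : (t.getD j []).getLast? = some y) :
    Before (maxWord t) x y := by
  have hne : ∀ c ∈ t, c ≠ [] := fun c hc => col_ne_nil hlen hc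
  have hj : j < t.length := lt_trans hji hi
  have hrev : (bottomRow t).reverse = t.reverse.map (fun c => c.getLast?.getD 0) := by
    rw [bottomRow_eq t hne, List.map_reverse]
  have hsplit : maxWord t =
      ((t.filterMap (fun c => if c.length = 2 then c.head? else none)) ++
        ((t.drop (j+1)).reverse.map (fun c => c.getLast?.getD 0))) ++
      ((t.take (j+1)).reverse.map (fun c => c.getLast?.getD 0)) := by
    show (t.filterMap (fun c => if c.length = 2 then c.head? else none)) ++
      (bottomRow t).reverse = _
    rw [hrev, List.append_assoc, ← List.map_append, ← reverse_append, take_append_drop]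
  refine before_of_eq hsplit (maxWord_nodup hlen hnd) ?_ ?_
  · refine mem_append.2 (Or.inr ?_)
    refine List.mem_map.2 ⟨t[i], mem_reverse.2 (getElem_mem_drop hji hi), ?_⟩
    rw [← List.getD_eq_getElem t [] hi, hx]
    rfl
  · refine List.mem_map.2 ⟨t[j], mem_reverse.2 (getElem_mem_take (Nat.lt_succ_self j) hj), ?_⟩
    rw [← List.getD_eq_getElem t [] hj, hy]
    rfl

lemma max_before_tops (hlen : ∀ c ∈ t, c.length = 1 ∨ c.length = 2)
    (hnd : t.flatten.Nodup) {i j x y : ℕ} (hij : i < j) (hj : j < t.length)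
    (hi2 : (t.getD i []).length = 2) (hj2 : (t.getD j []).length = 2)
    (hx : (t.getD i []).head? = some x) (hy : (t.getD j []).head? = some y) :
    Before (maxWord t) x y := by
  have hi : i < t.length := lt_trans hij hj
  have hsplit : maxWord t =
      ((t.take (i+1)).filterMap (fun c => if c.length = 2 then c.head? else none)) ++
      (((t.drop (i+1)).filterMap (fun c => if c.length = 2 then c.head? else none)) ++
        (bottomRow t).reverse) := by
    show (t.filterMap (fun c => if c.length = 2 then c.head? else none)) ++
      (bottomRow t).reverse = _
    rw [← List.append_assoc, ← List.filterMap_append, take_append_drop]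
  refine before_of_eq hsplit (maxWord_nodup hlen hnd) ?_ ?_
  · refine List.mem_filterMap.2 ⟨t.getD i [], ?_, by rw [if_pos hi2]; exact hx⟩
    rw [List.getD_eq_getElem t [] hi]
    exact getElem_mem_take (Nat.lt_succ_self i) hi
  · refine mem_append.2 (Or.inl ?_)
    refine List.mem_filterMap.2 ⟨t.getD j [], ?_, by rw [if_pos hj2]; exact hy⟩
    rw [List.getD_eq_getElem t [] hj]
    exact getElem_mem_drop hij hj

lemma find_col {x : ℕ} (hx : x ∈ t.flatten) :
    ∃ i, i < t.length ∧ x ∈ t.getD i [] := by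
  obtain ⟨c, hc, hxc⟩ := mem_flatten.1 hx
  obtain ⟨i, hi, hci⟩ := getElem_of_mem hc
  exact ⟨i, hi, by rw [List.getD_eq_getElem _ _ hi, hci]; exact hxc⟩

lemma mem_col_cases (hlen : ∀ c ∈ t, c.length = 1 ∨ c.length = 2)
    (hch : ∀ c ∈ t, List.Chain' (fun a b => b < a) c) {i x : ℕ}
    (hi : i < t.length) (hx : x ∈ t.getD i []) :
    (t.getD i []).getLast? = some x ∨
      ∃ a, a < x ∧ t.getD i [] = [x, a] := by
  rcases col_shape hlen hch (col_mem hi) with ⟨a, hcol⟩ | ⟨p, q, hpq, hcol⟩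
  · rw [hcol] at hx ⊢
    left
    simpa using (by simpa using hx : x = a).symm
  · rw [hcol] at hx ⊢
    rcases (by simpa using hx : x = p ∨ x = q) with rfl | rfl
    · exact Or.inr ⟨q, hpq, rfl⟩
    · left; simp

/-- min(t) is a linear extension. -/
lemma lep_before_min (hlen : ∀ c ∈ t, c.length = 1 ∨ c.length = 2)
    (hch : ∀ c ∈ t, List.Chain' (fun a b => b < a) c) (hnd : t.flatten.Nodup)
    {x y : ℕ} (h : LeP t x y) (hne : x ≠ y) : Before (minWord t) x y := by
  rcases h with rfl | ⟨i, j, hji, hi, hx, hlast⟩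
  · exact absurd rfl hne
  rcases Nat.lt_or_ge j i with hlt | hge
  · exact min_before_cols hnd hlt hi (mem_of_getLast?_eq hlast) hx
  · have hij : j = i := le_antisymm hji hge
    subst hij
    rcases col_shape hlen hch (col_mem hi) with ⟨a, hcol⟩ | ⟨p, q, hpq, hcol⟩
    · exfalso
      rw [hcol] at hx hlast
      have h1 : x = a := by simpa using hx
      have h2 : y = a := by simpa using hlast.symm
      exact hne (h1.trans h2.symm)
    · rw [hcol] at hx hlast
      have hyq : y = q := by simpa using hlast.symm
      rcases (by simpa using hx : x = p ∨ x = q) with rfl | rfl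
      · exact hyq ▸ min_before_pair hnd hi hcol
      · exact absurd hyq.symm hne

/-- max(t) is a linear extension. -/
lemma lep_before_max (hlen : ∀ c ∈ t, c.length = 1 ∨ c.length = 2)
    (hch : ∀ c ∈ t, List.Chain' (fun a b => b < a) c) (hnd : t.flatten.Nodup)
    {x y : ℕ} (h : LeP t x y) (hne : x ≠ y) : Before (maxWord t) x y := by
  rcases h with rfl | ⟨i, j, hji, hi, hx, hlast⟩
  · exact absurd rfl hne
  have hj : j < t.length := lt_of_le_of_lt hji hi
  rcases mem_col_cases hlen hch hi hx with hxlast | ⟨a, hax, hcol⟩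
  · -- x is the bottom entry of column i
    rcases Nat.lt_or_ge j i with hlt | hge
    · exact max_before_bots hlen hnd hlt hi hxlast hlast
    · exfalso
      have hij : j = i := le_antisymm hji hge
      subst hij
      rw [hxlast] at hlast
      exact hne (Option.some.inj hlast)
  · -- x is the top entry of a height-2 column
    refine max_before_top_bot hlen hnd ?_ (mem_bots (col_mem hj) hlast)
    exact mem_tops (col_mem hi) (by rw [hcol]; rfl) (by rw [hcol]; rfl)

/-- Every inversion of min(t) is forced. -/
lemma min_inv_lep (hlen : ∀ c ∈ t, c.length = 1 ∨ c.length = 2)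
    (hch : ∀ c ∈ t, List.Chain' (fun a b => b < a) c)
    (hdom : ∀ i j : ℕ, i < j → j < t.length →
      ∀ a ∈ (t.getD i []).head?, ∀ z ∈ t.getD j [], z < a)
    (hnd : t.flatten.Nodup)
    {x y : ℕ} (hb : Before (minWord t) x y) (hyx : y < x) : LeP t x y := by
  have hxf : x ∈ t.flatten := (minWord_perm (t := t)).subset hb.1
  have hyf : y ∈ t.flatten := (minWord_perm (t := t)).subset hb.2.1
  obtain ⟨i, hi, hxi⟩ := find_col hxf
  obtain ⟨j, hj, hyj⟩ := find_col hyf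
  rcases Nat.lt_trichotomy i j with hlt | rfl | hgt
  · exact absurd (min_before_cols hnd hlt hj hxi hyj) (fun hc => before_asymm hb hc)
  · rcases col_shape hlen hch (col_mem hi) with ⟨a, hcol⟩ | ⟨p, q, hpq, hcol⟩
    · exfalso
      rw [hcol] at hxi hyj
      have h1 : x = a := by simpa using hxi
      have h2 : y = a := by simpa using hyj
      omega
    · rw [hcol] at hxi hyj
      have hxpq : x = p ∨ x = q := by simpa using hxi
      have hypq : y = p ∨ y = q := by simpa using hyj
      rcases hxpq with rfl | rfl
      · rcases hypq with h' | h'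
        · omega
        · exact Or.inr ⟨i, i, le_refl _, hi, by rw [hcol]; simp,
            by rw [hcol, h']; simp⟩
      · rcases hypq with h' | h'
        · exact absurd (h' ▸ min_before_pair hnd hi hcol)
            (fun hc => before_asymm hb hc)
        · omega
  · -- j < i
    rcases mem_col_cases hlen hch hj hyj with hylast | ⟨a, hay, hcolj⟩
    · exact Or.inr ⟨i, j, le_of_lt hgt, hi, hxi, hylast⟩
    · exfalso
      have := hdom j i hgt hi y (by rw [hcolj]; rfl) x hxi
      omega

/-- Every non-inversion of max(t) is forced. -/
lemma max_noninv_lep (hlen : ∀ c ∈ t, c.length = 1 ∨ c.length = 2)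
    (hch : ∀ c ∈ t, List.Chain' (fun a b => b < a) c)
    (hdom : ∀ i j : ℕ, i < j → j < t.length →
      ∀ a ∈ (t.getD i []).head?, ∀ z ∈ t.getD j [], z < a)
    (hnd : t.flatten.Nodup)
    {x y : ℕ} (hb : Before (maxWord t) x y) (hxy : x < y) : LeP t x y := by
  have hxf : x ∈ t.flatten := (maxWord_perm t hlen).subset hb.1
  have hyf : y ∈ t.flatten := (maxWord_perm t hlen).subset hb.2.1
  obtain ⟨i, hi, hxi⟩ := find_col hxf
  obtain ⟨j, hj, hyj⟩ := find_col hyf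
  rcases mem_col_cases hlen hch hi hxi with hxlast | ⟨a, hax, hcoli⟩
  · rcases mem_col_cases hlen hch hj hyj with hylast | ⟨b, hby, hcolj⟩
    · -- both bottoms
      rcases Nat.lt_trichotomy i j with hlt | rfl | hgt
      · exact absurd (max_before_bots hlen hnd hlt hj hylast hxlast)
          (fun hc => before_asymm hb hc)
      · exfalso
        rw [hxlast] at hylast
        have := Option.some.inj hylast
        omega
      · exact Or.inr ⟨i, j, le_of_lt hgt, hi, hxi, hylast⟩
    · -- x bottom, y top: y before x in max, contradiction
      exfalso
      refine before_asymm hb (max_before_top_bot hlen hnd ?_ ?_)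
      · exact mem_tops (col_mem hj) (by rw [hcolj]; rfl) (by rw [hcolj]; rfl)
      · exact mem_bots (col_mem hi) hxlast
  · -- x top of column i
    rcases Nat.lt_trichotomy i j with hlt | rfl | hgt
    · exfalso
      have := hdom i j hlt hj x (by rw [hcoli]; rfl) y hyj
      omega
    · rcases mem_col_cases hlen hch hi hyj with hylast | ⟨b, hby, hcolj⟩
      · exact Or.inr ⟨i, i, le_refl _, hi, hxi, hylast⟩
      · exfalso
        rw [hcoli] at hcolj
        have : y = x := by
          have := hcolj
          injection this with h1 h2
          exact h1.symm ▸ rfl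
        omega
    · rcases mem_col_cases hlen hch hj hyj with hylast | ⟨b, hby, hcolj⟩
      · exact Or.inr ⟨i, j, le_of_lt hgt, hi, hxi, hylast⟩
      · exfalso
        refine before_asymm hb (max_before_tops hlen hnd hgt hi ?_ ?_ ?_ ?_)
        · rw [hcolj]; rfl
        · rw [hcoli]; rfl
        · rw [hcolj]; rfl
        · rw [hcoli]; rfl

end YF

end YFProofs

/-- the linear extensions of the canonical poset `P_t` form exactly
the interval `[min(t), max(t)]` of the weak order on `S_n`. -/
theorem linear_extensions_eq_weak_order_interval (n : ℕ) (t : List (List ℕ))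
    (ht : IsYFT n t) (w : List ℕ) (hw : w.Perm (List.range' 1 n)) :
    IsLinExt t w ↔ WordWeakLe (minWord t) w ∧ WordWeakLe w (maxWord t) := by
  obtain ⟨hlen, hch, hdom, hperm⟩ := ht
  have hndr : (List.range' 1 n).Nodup := by simp [List.nodup_range']
  have hnd : t.flatten.Nodup := hperm.symm.nodup hndr
  have hwnd : w.Nodup := hw.symm.nodup hndr
  have hminp : (minWord t).Perm w := (YF.minWord_perm).trans (hperm.trans hw.symm)
  have hmaxp : w.Perm (maxWord t) :=
    (hw.trans hperm.symm).trans (YF.maxWord_perm t hlen).symm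
  have hminnd : (minWord t).Nodup := YF.minWord_nodup hnd
  have hmaxnd : (maxWord t).Nodup := YF.maxWord_nodup hlen hnd
  constructor
  · intro hLE
    constructor
    · refine YF.invsub_weakle (YF.invP w).card (minWord t) hminp hminnd ?_ (Nat.sub_le _ _)
      intro q p hpq hb
      have hlep := YF.min_inv_lep hlen hch hdom hnd hb hpq
      have hrtg := YF.lep_rtg hlen hch hnd hlep
      have hne : q ≠ p := by omega
      exact ⟨hminp.subset hb.1, hminp.subset hb.2.1, hLE q p hrtg hne⟩
    · refine YF.invsub_weakle (YF.invP (maxWord t)).card w hmaxp hwnd ?_ (Nat.sub_le _ _)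
      intro q p hpq hb
      have hq : q ∈ maxWord t := hmaxp.subset hb.1
      have hp : p ∈ maxWord t := hmaxp.subset hb.2.1
      rcases YF.before_total hq hp (by omega : q ≠ p) with h | h
      · exact h
      · exfalso
        have hlep := YF.max_noninv_lep hlen hch hdom hnd h hpq
        have hrtg := YF.lep_rtg hlen hch hnd hlep
        have h2 := hLE p q hrtg (by omega)
        have h3 := hb.2.2
        omega
  · rintro ⟨h1, h2⟩
    obtain ⟨_, hsub1⟩ := YF.weakle_perm_before hminnd h1
    obtain ⟨_, hsub2⟩ := YF.weakle_perm_before hwnd h2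
    intro x y hxy hne
    have hlep := YF.rtg_lep hlen hch hnd hxy
    have hxyf : x ∈ t.flatten ∧ y ∈ t.flatten := by
      rcases hlep with rfl | ⟨i, j, hji, hi, hx, hlast⟩
      · exact absurd rfl hne
      · exact ⟨YF.mem_flatten_of_col hi hx,
          YF.mem_flatten_of_col (lt_of_le_of_lt hji hi) (YF.mem_of_getLast?_eq hlast)⟩
    have hxw : x ∈ w := (hperm.trans hw.symm).subset hxyf.1
    have hyw : y ∈ w := (hperm.trans hw.symm).subset hxyf.2
    rcases Nat.lt_trichotomy x y with hlt | heq | hgt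
    · rcases YF.before_total hxw hyw hne with h | h
      · exact h.2.2
      · exfalso
        exact YF.before_asymm (YF.lep_before_max hlen hch hnd hlep hne)
          (hsub2 y x hlt h)
    · exact absurd heq hne
    · exact (hsub1 x y hgt (YF.lep_before_min hlen hch hnd hlep hne)).2.2
end

section
/- Let u be a snakeshape of size n. Among the standard Young-Fibonacci tableaux of shape u, the column canonical tableau cT_u is the unique one of minimal rank and the row canonical tableau rT_u is the unique one of maximal rank, where the rank of a tableau t is ρ(t) = inv(min(t)). Moreover ρ(cT_u) equals the number of parts of u equal to 2, and ρ(rT_u) equals the sum over all cells c of u of the quantity λ(c), where λ(c) is the number of height-2 columns strictly to the left of the column containing c, plus 1 if c is the top cell of a height-2 column. -/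
def goL : List ℕ → ℕ
  | [] => 0
  | x :: xs => xs.countP (fun y => decide (y < x)) + goL xs

lemma goL_append_single (w : List ℕ) (z : ℕ) :
    goL (w ++ [z]) = goL w + w.countP (fun y => decide (z < y)) := by
  induction w with
  | nil => simp [goL]
  | cons x xs ih =>
      simp only [List.cons_append, goL, ih, List.countP_cons, List.countP_append,
        List.countP_nil, List.countP_singleton]
      by_cases h : z < x
      · have : ¬ (x < z) := Nat.lt_asymm h
        simp [h, this]; omega
      · by_cases h2 : x < z <;> simp [h, h2] <;> omega

lemma countP_card (P : ℕ → Bool) (l : List ℕ) :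
    ((Finset.range l.length).filter (fun i => P (l.getD i 0))).card = l.countP P := by
  induction l using List.reverseRecOn with
  | nil => simp
  | append_singleton l z ih =>
      rw [List.length_append, List.length_singleton, Finset.range_add_one, Finset.filter_insert]
      have hgd : ∀ i ∈ Finset.range l.length, (l ++ [z]).getD i 0 = l.getD i 0 := by
        intro i hi
        simp only [Finset.mem_range] at hi
        rw [List.getD_eq_getElem _ _ (by simp; omega), List.getElem_append_left hi,
          List.getD_eq_getElem _ _ hi]
      have hlast : (l ++ [z]).getD l.length 0 = z := by
        rw [List.getD_eq_getElem _ _ (by simp), List.getElem_append_right (le_refl _)]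
        simp
      rw [Finset.filter_congr (fun i hi => by rw [hgd i hi])]
      by_cases h : P z
      · rw [if_pos (by rw [hlast]; exact h), Finset.card_insert_of_notMem (by simp), ih]
        simp [List.countP_append, List.countP_singleton, h]
      · rw [if_neg (by rw [hlast]; simp [h]), ih]
        simp [List.countP_append, List.countP_singleton, h]

lemma invCount_eq_goL (w : List ℕ) : invCount w = goL w := by
  induction w using List.reverseRecOn with
  | nil => simp [invCount, goL]
  | append_singleton w z ih =>
      rw [goL_append_single, ← ih, Nat.add_comm]
      unfold invCount
      set n := w.length with hn
      have hlen : (w ++ [z]).length = n + 1 := by simp [hn]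
      have hgd : ∀ i < n, (w ++ [z]).getD i 0 = w.getD i 0 := by
        intro i hi
        rw [List.getD_eq_getElem _ _ (by simp; omega), List.getElem_append_left hi,
          List.getD_eq_getElem _ _ hi]
      have hlast : (w ++ [z]).getD n 0 = z := by
        rw [List.getD_eq_getElem _ _ (by simp [hn]), List.getElem_append_right (le_refl _)]
        simp
      rw [hlen]
      set S := (Finset.range (n+1) ×ˢ Finset.range (n+1)).filter
        (fun p => p.1 < p.2 ∧ (w ++ [z]).getD p.2 0 < (w ++ [z]).getD p.1 0) with hS
      rw [← Finset.card_filter_add_card_filter_not (p := fun p => p.2 = n) (s := S)]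
      congr 1
      · -- pairs ending at n
        rw [← countP_card (fun y => decide (z < y)) w]
        apply Finset.card_bij (fun p _ => p.1)
        · intro p hp
          simp only [hS, Finset.mem_filter, Finset.mem_product, Finset.mem_range] at hp
          obtain ⟨⟨⟨h1, h2⟩, h3, h4⟩, h5⟩ := hp
          rw [h5, hlast] at h4
          rw [h5] at h3
          rw [hgd p.1 h3] at h4
          simp only [Finset.mem_filter, Finset.mem_range]
          exact ⟨h3, by simpa using h4⟩
        · intro p hp q hq hpq
          simp only [hS, Finset.mem_filter] at hp hq
          exact Prod.ext hpq (hp.2.symm ▸ hq.2.symm ▸ rfl)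
        · intro a ha
          simp only [Finset.mem_filter, Finset.mem_range, decide_eq_true_eq] at ha
          refine ⟨(a, n), ?_, rfl⟩
          simp only [hS, Finset.mem_filter, Finset.mem_product, Finset.mem_range]
          rw [hlast, hgd a ha.1]
          exact ⟨⟨⟨by omega, by omega⟩, ha.1, ha.2⟩, trivial⟩
      · -- pairs not ending at n
        apply Finset.card_bij (fun p _ => p)
        · intro p hp
          simp only [hS, Finset.mem_filter, Finset.mem_product, Finset.mem_range] at hp
          obtain ⟨⟨⟨h1, h2⟩, h3, h4⟩, h5⟩ := hp
          have hp2 : p.2 < n := by omega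
          rw [hgd p.2 hp2, hgd p.1 (by omega)] at h4
          simp only [Finset.mem_filter, Finset.mem_product, Finset.mem_range]
          exact ⟨⟨by omega, hp2⟩, h3, h4⟩
        · intro p hp q hq h; exact h
        · intro p hp
          simp only [Finset.mem_filter, Finset.mem_product, Finset.mem_range] at hp
          obtain ⟨⟨h1, h2⟩, h3, h4⟩ := hp
          refine ⟨p, ?_, rfl⟩
          simp only [hS, Finset.mem_filter, Finset.mem_product, Finset.mem_range]
          refine ⟨⟨⟨by omega, by omega⟩, h3, ?_⟩, by omega⟩
          rw [hgd p.2 h2, hgd p.1 h1]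
          exact h4

def crossN (xs ys : List ℕ) : ℕ :=
  (xs.map (fun x => ys.countP (fun y => decide (y < x)))).sum

lemma goL_append (xs ys : List ℕ) :
    goL (xs ++ ys) = goL xs + crossN xs ys + goL ys := by
  induction xs with
  | nil => simp [goL, crossN]
  | cons x xs ih =>
      rw [List.cons_append]
      show List.countP _ _ + goL (xs ++ ys) = _
      rw [ih, List.countP_append]
      simp only [goL, crossN, List.map_cons, List.sum_cons]
      omega

lemma crossN_eq_zero_iff (xs ys : List ℕ) :
    crossN xs ys = 0 ↔ ∀ x ∈ xs, ∀ y ∈ ys, ¬ y < x := by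
  unfold crossN
  rw [List.sum_eq_zero_iff]
  constructor
  · intro h x hx y hy hlt
    have := h _ (List.mem_map_of_mem hx)
    rw [List.countP_eq_zero] at this
    exact this y hy (by simpa using hlt)
  · intro h z hz
    obtain ⟨x, hx, rfl⟩ := List.mem_map.1 hz
    rw [List.countP_eq_zero]
    intro y hy
    simpa using h x hx y hy

lemma crossN_le (xs ys : List ℕ) (k : ℕ) (h : ∀ x ∈ xs, ys.countP (fun y => decide (y < x)) ≤ k) :
    crossN xs ys ≤ xs.length * k := by
  unfold crossN
  induction xs with
  | nil => simp
  | cons x xs ih =>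
      simp only [List.map_cons, List.sum_cons, List.length_cons]
      have h1 := h x (List.mem_cons_self)
      have h2 := ih (fun x hx => h x (List.mem_cons_of_mem _ hx))
      calc _ ≤ k + xs.length * k := by omega
        _ = (xs.length + 1) * k := by ring

lemma sum_eq_len_forces (xs : List ℕ) (f : ℕ → ℕ) (hle : ∀ x ∈ xs, f x ≤ 1)
    (heq : (xs.map f).sum = xs.length) : ∀ x ∈ xs, f x = 1 := by
  induction xs with
  | nil => simp
  | cons x xs ih =>
      simp only [List.map_cons, List.sum_cons, List.length_cons] at heq
      have h1 := hle x (List.mem_cons_self)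
      have hsle : (xs.map f).sum ≤ xs.length := by
        have : ∀ y ∈ xs.map f, y ≤ 1 := by
          intro y hy; obtain ⟨a, ha, rfl⟩ := List.mem_map.1 hy
          exact hle a (List.mem_cons_of_mem _ ha)
        calc (xs.map f).sum ≤ (xs.map f).length * 1 := List.sum_le_card_nsmul _ 1 this
          _ = xs.length := by simp
      intro a ha
      rcases List.mem_cons.1 ha with rfl | ha'
      · omega
      · exact ih (fun y hy => hle y (List.mem_cons_of_mem _ hy)) (by omega) a ha'

lemma perm_split : ∀ (k : ℕ) (l₁ l₂ : List ℕ) (s m : ℕ), l₁.length = k →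
    (l₁ ++ l₂).Perm (List.range' s m) → (∀ x ∈ l₁, ∀ y ∈ l₂, x < y) →
    l₁.Perm (List.range' s k) ∧ l₂.Perm (List.range' (s + k) (m - k)) := by
  intro k
  induction k with
  | zero =>
      intro l₁ l₂ s m hlen hperm hlt
      rw [List.length_eq_zero_iff] at hlen
      subst hlen
      simpa using hperm
  | succ k ih =>
      intro l₁ l₂ s m hlen hperm hlt
      have hmpos : 0 < m := by
        have := hperm.length_eq
        simp at this
        omega
      obtain ⟨m', rfl⟩ : ∃ m', m = m' + 1 := ⟨m - 1, by omega⟩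
      have hrange : List.range' s (m' + 1) = s :: List.range' (s + 1) m' := List.range'_succ (s := s) (n := m') (step := 1)
      have hs_mem : s ∈ l₁ ++ l₂ := hperm.mem_iff.2 (by rw [hrange]; exact List.mem_cons_self)
      have hslb : ∀ x ∈ l₁ ++ l₂, s ≤ x := by
        intro x hx
        have := hperm.mem_iff.1 hx
        rw [List.mem_range'_1] at this
        exact this.1
      have hne : l₁ ≠ [] := by intro h; subst h; simp at hlen
      have hs1 : s ∈ l₁ := by
        rcases List.mem_append.1 hs_mem with h | h
        · exact h
        · obtain ⟨x, hx⟩ := List.exists_mem_of_ne_nil _ hne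
          have h1 : x < s := hlt x hx s h
          have h2 : s ≤ x := hslb x (List.mem_append_left _ hx)
          omega
      have herase : (l₁.erase s ++ l₂).Perm (List.range' (s + 1) m') := by
        have h1 : (l₁ ++ l₂).erase s = l₁.erase s ++ l₂ := List.erase_append_left _ hs1
        have h2 := hperm.erase s
        rw [h1, hrange] at h2
        simpa using h2
      have hlt' : ∀ x ∈ l₁.erase s, ∀ y ∈ l₂, x < y := fun x hx =>
        hlt x (List.mem_of_mem_erase hx)
      have hlen' : (l₁.erase s).length = k := by
        simp [List.length_erase_of_mem hs1, hlen]
      obtain ⟨p1, p2⟩ := ih (l₁.erase s) l₂ (s + 1) m' hlen' herase hlt'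
      constructor
      · have h1 : l₁.Perm (s :: l₁.erase s) := List.perm_cons_erase hs1
        have h2 := h1.trans (p1.cons s)
        rw [List.range'_succ]
        exact h2
      · have e1 : s + 1 + k = s + (k + 1) := by omega
        rw [e1] at p2
        have e2 : m' - k = m' + 1 - (k + 1) := by omega
        rwa [e2] at p2

lemma desc_perm_eq' (c : List ℕ) (s k : ℕ) (hc : List.Pairwise (fun a b => b < a) c)
    (hp : c.Perm (List.range' s k)) : c = (List.range' s k).reverse := by
  haveI : IsAntisymm ℕ (fun a b : ℕ => b < a) := ⟨fun a b h1 h2 => (Nat.lt_asymm h1 h2).elim⟩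
  apply List.Perm.eq_of_pairwise' (r := fun a b => b < a) hc ?_ (hp.trans (List.reverse_perm _).symm)
  rw [List.pairwise_reverse]
  exact List.pairwise_lt_range' (s := s) (n := k) 1

lemma desc_perm_eq (c : List ℕ) (s k : ℕ) (hc : List.Chain' (fun a b => b < a) c)
    (hp : c.Perm (List.range' s k)) : c = (List.range' s k).reverse :=
  desc_perm_eq' c s k (List.isChain_iff_pairwise.1 hc) hp

lemma perm_split' (l₁ l₂ : List ℕ) (s m : ℕ)
    (hperm : (l₁ ++ l₂).Perm (List.range' s m)) (hlt : ∀ y ∈ l₂, ∀ x ∈ l₁, y < x) :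
    l₂.Perm (List.range' s l₂.length) ∧
      l₁.Perm (List.range' (s + l₂.length) (m - l₂.length)) :=
  perm_split l₂.length l₂ l₁ s m rfl (List.perm_append_comm.trans hperm)
    (fun x hx y hy => hlt x hx y hy)

lemma asc_perm_eq (c : List ℕ) (s k : ℕ) (hc : List.Pairwise (· < ·) c)
    (hp : c.Perm (List.range' s k)) : c = List.range' s k := by
  haveI : IsAntisymm ℕ (fun a b : ℕ => a < b) := ⟨fun a b h1 h2 => (Nat.lt_asymm h1 h2).elim⟩
  exact List.Perm.eq_of_pairwise' hc (List.pairwise_lt_range' (s := s) (n := k) 1) hp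

def topsL (t : List (List ℕ)) : List ℕ := t.map (fun c => c.headD 0)

def botsL (t : List (List ℕ)) : List ℕ := t.flatMap (fun c => c.drop 1)

lemma flatten_perm_tops_bots (t : List (List ℕ)) (h : ∀ c ∈ t, c ≠ []) :
    t.flatten.Perm (topsL t ++ botsL t) := by
  induction t with
  | nil => simp [topsL, botsL]
  | cons c t ih =>
      have hc := h c (List.mem_cons_self)
      have ih' := ih (fun c hc => h c (List.mem_cons_of_mem _ hc))
      simp only [List.flatten_cons, topsL, botsL, List.map_cons, List.flatMap_cons]
      have hc2 : c = c.headD 0 :: c.drop 1 := by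
        cases c with
        | nil => exact absurd rfl hc
        | cons a c => simp
      have p1 : (c ++ t.flatten).Perm (c ++ (topsL t ++ botsL t)) := ih'.append_left c
      have p3 : (c.drop 1 ++ (topsL t ++ botsL t)).Perm (topsL t ++ (c.drop 1 ++ botsL t)) := by
        have h3 : (c.drop 1 ++ topsL t).Perm (topsL t ++ c.drop 1) := List.perm_append_comm
        have h4 := h3.append_right (botsL t)
        rw [List.append_assoc, List.append_assoc] at h4
        exact h4
      refine p1.trans ?_
      conv_lhs => rw [hc2]
      rw [List.cons_append]
      refine (p3.cons _).trans ?_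
      simp [topsL, botsL]

lemma getD_map_col (g : List ℕ → List ℕ) (hg : g [] = []) (t : List (List ℕ)) (i : ℕ) :
    (t.map g).getD i [] = g (t.getD i []) := by
  by_cases h : i < t.length
  · rw [List.getD_eq_getElem _ _ (by simpa using h), List.getD_eq_getElem _ _ h,
      List.getElem_map]
  · rw [List.getD_eq_default _ _ (by simpa using not_lt.1 h), List.getD_eq_default _ _ (not_lt.1 h), hg]

lemma mem_getD_flatten {t : List (List ℕ)} {i : ℕ} {x : ℕ} (h : x ∈ t.getD i []) :
    x ∈ t.flatten := by
  by_cases hi : i < t.length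
  · rw [List.getD_eq_getElem _ _ hi] at h
    exact List.mem_flatten.2 ⟨t[i], List.getElem_mem hi, h⟩
  · rw [List.getD_eq_default _ _ (not_lt.1 hi)] at h
    simp at h

lemma map_add_range' (a s m : ℕ) :
    (List.range' s m).map (· + a) = List.range' (s + a) m := by
  induction m generalizing s with
  | zero => simp
  | succ m ih => rw [List.range'_succ, List.range'_succ, List.map_cons, ih]; ring_nf

lemma goL_map_add (w : List ℕ) (a : ℕ) : goL (w.map (· + a)) = goL w := by
  induction w with
  | nil => rfl
  | cons x xs ih =>
      simp only [List.map_cons, goL, ih, List.countP_map]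
      congr 1
      apply List.countP_congr
      intro y _
      simp only [Function.comp_apply, decide_eq_true_eq]
      constructor <;> intro <;> omega

lemma cT_cons (h : ℕ) (u : List ℕ) :
    cTcols (h :: u) = (if h = 2 then [u.sum + 2, u.sum + 1] else [u.sum + 1]) :: cTcols u := by
  unfold cTcols
  rw [List.length_cons, List.range_succ_eq_map, List.map_cons, List.map_map]
  congr 1
  · simp
  · apply List.map_congr_left
    intro i hi
    simp only [Function.comp_apply, Nat.succ_eq_add_one, List.take_succ_cons, List.sum_cons,
      List.getD_cons_succ]
    have : h + u.sum - (h + (u.take (i + 1)).sum) = u.sum - (u.take (i + 1)).sum := by omega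
    rw [this]

lemma rT_cons1 (u : List ℕ) :
    rTcols (u.sum + 1) (1 :: u) = [u.sum + 1] :: rTcols u.sum u := by
  unfold rTcols
  rw [List.length_cons, List.range_succ_eq_map, List.map_cons, List.map_map]
  congr 1
  apply List.map_congr_left
  intro i hi
  simp only [Function.comp_apply, List.getD_cons_succ, List.take_succ_cons, List.count_cons]
  have e : u.sum + 1 - (i + 1) = u.sum - i := by omega
  rw [e]
  norm_num

lemma rT_cons2 (u : List ℕ) (hlen : u.length ≤ u.sum) :
    rTcols (u.sum + 2) (2 :: u) =
      [u.sum + 2, 1] :: (rTcols u.sum u).map (List.map (· + 1)) := by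
  unfold rTcols
  rw [List.length_cons, List.range_succ_eq_map, List.map_cons, List.map_map, List.map_map]
  congr 1
  apply List.map_congr_left
  intro i hi
  simp only [List.mem_range] at hi
  simp only [Function.comp_apply, List.getD_cons_succ, List.take_succ_cons, List.count_cons]
  have e : u.sum + 2 - (i + 1) = (u.sum - i) + 1 := by omega
  rw [e]
  by_cases h2 : u[i]?.getD 0 = 2 <;> simp [h2]

def Fshape (u : List ℕ) : ℕ :=
  ((List.range u.length).map (fun i =>
    (u.take i).count 2 * u.getD i 0 + if u.getD i 0 = 2 then 1 else 0)).sum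

lemma sum_map_add (l : List ℕ) (f g : ℕ → ℕ) :
    (l.map (fun i => f i + g i)).sum = (l.map f).sum + (l.map g).sum := by
  induction l with
  | nil => simp
  | cons x l ih => simp only [List.map_cons, List.sum_cons, ih]; omega

lemma map_getD_range (u : List ℕ) : ((List.range u.length).map (fun i => u.getD i 0)).sum = u.sum := by
  induction u with
  | nil => simp
  | cons x u ih =>
      rw [List.length_cons, List.range_succ_eq_map, List.map_cons, List.map_map,
        show ((fun i => (x :: u).getD i 0) ∘ Nat.succ) = (fun i => u.getD i 0) from rfl,
        List.sum_cons, ih]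
      simp

lemma sum_range_cons (f : ℕ → ℕ) (L : ℕ) :
    ((List.range (L + 1)).map f).sum = f 0 + ((List.range L).map (f ∘ Nat.succ)).sum := by
  rw [List.range_succ_eq_map, List.map_cons, List.map_map, List.sum_cons]

lemma Fshape_cons1 (u : List ℕ) : Fshape (1 :: u) = Fshape u := by
  unfold Fshape
  rw [List.length_cons, sum_range_cons]
  have h1 : ((fun i => ((1 :: u).take i).count 2 * (1 :: u).getD i 0 +
        if (1 :: u).getD i 0 = 2 then 1 else 0) ∘ Nat.succ) =
      (fun i => (u.take i).count 2 * u.getD i 0 + if u.getD i 0 = 2 then 1 else 0) := by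
    funext i
    simp [List.count_cons]
  rw [h1]
  simp

lemma Fshape_cons2 (u : List ℕ) : Fshape (2 :: u) = Fshape u + u.sum + 1 := by
  unfold Fshape
  rw [List.length_cons, sum_range_cons]
  have h1 : ((fun i => ((2 :: u).take i).count 2 * (2 :: u).getD i 0 +
        if (2 :: u).getD i 0 = 2 then 1 else 0) ∘ Nat.succ) =
      (fun i => ((u.take i).count 2 * u.getD i 0 + if u.getD i 0 = 2 then 1 else 0) +
        u.getD i 0) := by
    funext i
    by_cases h : u.getD i 0 = 2 <;> simp [List.count_cons, h] <;> ring
  rw [h1, sum_map_add, map_getD_range]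
  simp
  try omega

lemma minWord_cons (c : List ℕ) (t : List (List ℕ)) :
    minWord (c :: t) = minWord t ++ c := by
  simp [minWord]

lemma mem_minWord {x : ℕ} {t : List (List ℕ)} : x ∈ minWord t ↔ x ∈ t.flatten := by
  simp [minWord, List.mem_reverse]

lemma len_minWord (t : List (List ℕ)) : (minWord t).length = (shapeOf t).sum := by
  simp only [minWord, shapeOf, List.length_flatten, List.map_reverse]
  exact List.sum_reverse _

lemma goL_col (c : List ℕ) (hlen : c.length = 1 ∨ c.length = 2)
    (hc : List.Chain' (fun a b => b < a) c) :
    goL c = if c.length = 2 then 1 else 0 := by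
  rcases hlen with h | h
  · obtain ⟨a, rfl⟩ := List.length_eq_one_iff.1 h
    simp [goL]
  · obtain ⟨a, b, rfl⟩ := List.length_eq_two.1 h
    simp only [List.Chain', List.isChain_cons_cons, List.isChain_singleton, and_true] at hc
    simp [goL, hc]

lemma mem_flatten_getD {t : List (List ℕ)} {x : ℕ} (h : x ∈ t.flatten) :
    ∃ j < t.length, x ∈ t.getD j [] := by
  obtain ⟨l, hl, hx⟩ := List.mem_flatten.1 h
  obtain ⟨j, hj, rfl⟩ := List.mem_iff_getElem.1 hl
  exact ⟨j, hj, by rwa [List.getD_eq_getElem _ _ hj]⟩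

lemma min_main : ∀ (t : List (List ℕ)),
    (∀ c ∈ t, c.length = 1 ∨ c.length = 2) →
    (∀ c ∈ t, List.Chain' (fun a b => b < a) c) →
    t.countP (fun c => decide (c.length = 2)) ≤ goL (minWord t) ∧
    (goL (minWord t) = t.countP (fun c => decide (c.length = 2)) →
      ∀ i, ∀ x ∈ (t.drop (i + 1)).flatten, ∀ y ∈ t.getD i [], x ≤ y) := by
  intro t
  induction t with
  | nil => simp [minWord, goL]
  | cons c t ih =>
      intro hlen hcol
      have hlen' := fun d hd => hlen d (List.mem_cons_of_mem _ hd)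
      have hcol' := fun d hd => hcol d (List.mem_cons_of_mem _ hd)
      obtain ⟨ih1, ih2⟩ := ih hlen' hcol'
      have hgo : goL (minWord (c :: t)) =
          goL (minWord t) + crossN (minWord t) c + goL c := by
        rw [minWord_cons, goL_append]
      have hcolval : goL c = if c.length = 2 then 1 else 0 :=
        goL_col c (hlen c (List.mem_cons_self)) (hcol c (List.mem_cons_self))
      have hcp : (c :: t).countP (fun c => decide (c.length = 2)) =
          t.countP (fun c => decide (c.length = 2)) + if c.length = 2 then 1 else 0 := by
        rw [List.countP_cons]
        by_cases h : c.length = 2 <;> simp [h]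
      constructor
      · rw [hgo, hcp, hcolval]; omega
      · intro heq i
        rw [hgo, hcp, hcolval] at heq
        have hz : crossN (minWord t) c = 0 := by omega
        have heq' : goL (minWord t) = t.countP (fun c => decide (c.length = 2)) := by omega
        match i with
        | 0 =>
            intro x hx y hy
            rw [List.drop_succ_cons, List.drop_zero] at hx
            have := (crossN_eq_zero_iff _ _).1 hz x (mem_minWord.2 hx) y
            rw [List.getD_cons_zero] at hy
            exact Nat.le_of_not_lt (this hy)
        | i + 1 =>
            intro x hx y hy
            rw [List.drop_succ_cons] at hx
            rw [List.getD_cons_succ] at hy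
            exact ih2 heq' i x hx y hy

lemma max_main : ∀ (t : List (List ℕ)),
    (∀ c ∈ t, c.length = 1 ∨ c.length = 2) →
    (∀ c ∈ t, List.Chain' (fun a b => b < a) c) →
    (∀ i j : ℕ, i < j → j < t.length → ∀ a ∈ (t.getD i []).head?, ∀ x ∈ t.getD j [], x < a) →
    goL (minWord t) ≤ Fshape (shapeOf t) ∧
    (goL (minWord t) = Fshape (shapeOf t) →
      ∀ i, (t.getD i []).length = 2 →
        ∀ x ∈ (t.drop (i + 1)).flatten, (t.getD i []).getD 1 0 < x) := by
  intro t
  induction t with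
  | nil =>
      intro _ _ _
      constructor
      · simp [minWord, goL]
      · intro _ i hi
        simp at hi
  | cons c t ih =>
      intro hlen hcol hdom
      have hlen' := fun d hd => hlen d (List.mem_cons_of_mem _ hd)
      have hcol' := fun d hd => hcol d (List.mem_cons_of_mem _ hd)
      have hdom' : ∀ i j : ℕ, i < j → j < t.length →
          ∀ a ∈ (t.getD i []).head?, ∀ x ∈ t.getD j [], x < a := by
        intro i j hij hj a ha x hx
        exact hdom (i+1) (j+1) (by omega) (by simpa using hj)
          a (by rwa [List.getD_cons_succ]) x (by rwa [List.getD_cons_succ])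
      obtain ⟨ih1, ih2⟩ := ih hlen' hcol' hdom'
      have hgo : goL (minWord (c :: t)) =
          goL (minWord t) + crossN (minWord t) c + goL c := by
        rw [minWord_cons, goL_append]
      have hcolval : goL c = if c.length = 2 then 1 else 0 :=
        goL_col c (hlen c (List.mem_cons_self)) (hcol c (List.mem_cons_self))
      -- dominance of the head of c over all entries of t
      have hheads : ∀ x ∈ minWord t, ∀ b ∈ c.head?, x < b := by
        intro x hx b hb
        obtain ⟨j, hj, hxj⟩ := mem_flatten_getD (mem_minWord.1 hx)
        exact hdom 0 (j+1) (by omega) (by simpa using hj) b (by simpa using hb) x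
          (by rwa [List.getD_cons_succ])
      have hshape : shapeOf (c :: t) = c.length :: shapeOf t := rfl
      have hsum : (shapeOf t).sum = (minWord t).length := (len_minWord t).symm
      rcases hlen c (List.mem_cons_self) with h1 | h2
      · -- height 1 column
        obtain ⟨a, rfl⟩ := List.length_eq_one_iff.1 h1
        have hz : crossN (minWord t) [a] = 0 := by
          rw [crossN_eq_zero_iff]
          intro x hx y hy
          rcases List.mem_singleton.1 hy with rfl
          exact Nat.lt_asymm (hheads x hx y (by simp))
        have hF : Fshape (shapeOf ([a] :: t)) = Fshape (shapeOf t) := by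
          rw [hshape]; exact Fshape_cons1 _
        constructor
        · rw [hgo, hF, hz, hcolval]; simpa using ih1
        · intro heq i hi
          rw [hgo, hF, hz, hcolval] at heq
          simp only [List.length_singleton] at heq
          norm_num at heq
          match i with
          | 0 => simp at hi
          | i + 1 =>
              intro x hx
              rw [List.drop_succ_cons] at hx
              rw [List.getD_cons_succ] at hi ⊢
              exact ih2 heq i hi x hx
      · -- height 2 column
        obtain ⟨b, a, rfl⟩ := List.length_eq_two.1 h2
        have hcountle : ∀ x ∈ minWord t, List.countP (fun y => decide (y < x)) [b, a] ≤ 1 := by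
          intro x hx
          have hb : ¬ (b < x) := Nat.lt_asymm (hheads x hx b (by simp))
          have hcp : List.countP (fun y => decide (y < x)) [b, a] =
              if a < x then 1 else 0 := by
            simp [List.countP_cons, hb]
          rw [hcp]
          split <;> omega
        have hcle : crossN (minWord t) [b, a] ≤ (minWord t).length * 1 :=
          crossN_le _ _ 1 hcountle
        have hF : Fshape (shapeOf ([b, a] :: t)) =
            Fshape (shapeOf t) + (minWord t).length + 1 := by
          rw [hshape]
          show Fshape (2 :: shapeOf t) = _
          rw [Fshape_cons2, hsum]
        constructor
        · rw [hgo, hF, hcolval]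
          simp only [List.length_cons, List.length_singleton]
          norm_num
          omega
        · intro heq i hi
          rw [hgo, hF, hcolval] at heq
          simp only [List.length_cons, List.length_singleton] at heq
          norm_num at heq
          have hceq : crossN (minWord t) [b, a] = (minWord t).length := by omega
          have heq' : goL (minWord t) = Fshape (shapeOf t) := by omega
          match i with
          | 0 =>
              intro x hx
              rw [List.drop_succ_cons, List.drop_zero] at hx
              have hall := sum_eq_len_forces (minWord t)
                (fun x => List.countP (fun y => decide (y < x)) [b, a]) hcountle hceq
                x (mem_minWord.2 hx)
              have hb : ¬ (b < x) := Nat.lt_asymm (hheads x (mem_minWord.2 hx) b (by simp))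
              simp only [List.countP_cons, List.countP_nil, decide_eq_true_eq] at hall
              simp only [List.getD_cons_zero, List.getD_cons_succ]
              by_cases ha : a < x
              · exact ha
              · exfalso; revert hall; simp [ha, hb]
          | i + 1 =>
              intro x hx
              rw [List.drop_succ_cons] at hx
              rw [List.getD_cons_succ] at hi ⊢
              exact ih2 heq' i hi x hx

lemma mem_flatten_take {t : List (List ℕ)} {i : ℕ} {x : ℕ} (h : x ∈ (t.take i).flatten) :
    ∃ j, ∃ hj : j < t.length, j < i ∧ x ∈ t[j] := by
  obtain ⟨l, hl, hx⟩ := List.mem_flatten.1 h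
  obtain ⟨j, hj, rfl⟩ := List.mem_iff_getElem.1 hl
  have hj1 : j < i := lt_of_lt_of_le hj (by simp [List.length_take])
  have hj2 : j < t.length := lt_of_lt_of_le hj (by simp [List.length_take])
  refine ⟨j, hj2, hj1, ?_⟩
  rw [List.getElem_take' hj2 hj1]
  exact hx

lemma mem_flatten_drop_le {t : List (List ℕ)} {i j : ℕ} (hji : j ≤ i) {y : ℕ}
    (h : y ∈ (t.drop i).flatten) : y ∈ (t.drop j).flatten := by
  have heq : t.drop i = (t.drop j).drop (i - j) := by
    rw [List.drop_drop]; congr 1; omega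
  rw [heq] at h
  have h2 : (((t.drop j).take (i - j)).flatten) ++ (((t.drop j).drop (i - j)).flatten)
      = (t.drop j).flatten := by
    rw [← List.flatten_append, List.take_append_drop]
  rw [← h2]
  exact List.mem_append_right _ h

lemma flatten_take_drop (t : List (List ℕ)) (k : ℕ) :
    (t.take k).flatten ++ (t.drop k).flatten = t.flatten := by
  rw [← List.flatten_append, List.take_append_drop]

lemma sum_drop_eq (u : List ℕ) (k : ℕ) : (u.drop k).sum = u.sum - (u.take k).sum := by
  have := List.sum_take_add_sum_drop u k
  omega

lemma cT_reconstruct (t : List (List ℕ)) (n : ℕ)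
    (hlen : ∀ c ∈ t, c.length = 1 ∨ c.length = 2)
    (hcol : ∀ c ∈ t, List.Chain' (fun a b => b < a) c)
    (hperm : t.flatten.Perm (List.range' 1 n))
    (hcond : ∀ i, ∀ x ∈ (t.drop (i + 1)).flatten, ∀ y ∈ t.getD i [], x ≤ y) :
    t = cTcols (shapeOf t) := by
  have hnodup : t.flatten.Nodup := hperm.nodup_iff.2 (List.nodup_range' (s := 1) (n := n))
  have hdisj : ∀ k, List.Disjoint (t.take k).flatten (t.drop k).flatten := by
    intro k
    have h2 := hnodup
    rw [← flatten_take_drop t k, List.nodup_append] at h2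
    exact fun a ha hb => h2.2.2 a ha a hb rfl
  -- entries right of position k are smaller than entries at positions < k
  have hsplit : ∀ k, ∀ y ∈ (t.drop k).flatten, ∀ x ∈ (t.take k).flatten, y < x := by
    intro k y hy x hx
    obtain ⟨j, hjt, hjk, hxj⟩ := mem_flatten_take hx
    have hy' : y ∈ (t.drop (j + 1)).flatten := mem_flatten_drop_le (by omega) hy
    have hle : y ≤ x := by
      refine hcond j y hy' x ?_
      rwa [List.getD_eq_getElem _ _ hjt]
    have hne : y ≠ x := fun h => hdisj k (h ▸ hx) hy
    omega
  have hcols : ∀ (i : ℕ) (hi : i < t.length),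
      t[i] = (let s := (shapeOf t).sum - ((shapeOf t).take (i + 1)).sum
        if (shapeOf t).getD i 0 = 2 then [s + 2, s + 1] else [s + 1]) := by
    intro i hi
    have hdropperm : (t.drop i).flatten.Perm
        (List.range' 1 (t.drop i).flatten.length) := by
      have := perm_split' (t.take i).flatten (t.drop i).flatten 1 n
        (by rw [flatten_take_drop]; exact hperm) (hsplit i)
      exact this.1
    have hdecomp : (t.drop i).flatten = t[i] ++ (t.drop (i + 1)).flatten := by
      rw [List.drop_eq_getElem_cons hi, List.flatten_cons]
    have hlt2 : ∀ y ∈ (t.drop (i + 1)).flatten, ∀ x ∈ t[i], y < x := by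
      intro y hy x hx
      have hle : y ≤ x := hcond i y hy x (by rwa [List.getD_eq_getElem _ _ hi])
      have hxd : x ∈ (t.drop i).flatten := by rw [hdecomp]; exact List.mem_append_left _ hx
      have hyd : y ∈ (t.drop (i+1)).flatten := hy
      have hne : y ≠ x := by
        intro h
        subst h
        have hnd : (t.drop i).flatten.Nodup :=
          hdropperm.nodup_iff.2 (List.nodup_range' (s := 1) (n := (t.drop i).flatten.length))
        rw [hdecomp, List.nodup_append] at hnd
        exact hnd.2.2 _ hx _ hy rfl
      omega
    have hsplit2 := perm_split' t[i] (t.drop (i+1)).flatten 1 (t.drop i).flatten.length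
      (by rw [← hdecomp]; exact hdropperm) hlt2
    have hcolperm := hsplit2.2
    -- identify the interval
    have hslen : (t.drop (i+1)).flatten.length = ((shapeOf t).drop (i + 1)).sum := by
      rw [List.length_flatten]
      congr 1
      simp [shapeOf, List.map_drop]
    have hdlen : (t.drop i).flatten.length =
        (t.drop (i+1)).flatten.length + t[i].length := by
      rw [hdecomp, List.length_append]; omega
    set s := (shapeOf t).sum - ((shapeOf t).take (i + 1)).sum with hs
    have hseq : (t.drop (i+1)).flatten.length = s := by
      rw [hslen, hs, sum_drop_eq]
    have hcolperm' : t[i].Perm (List.range' (1 + s) t[i].length) := by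
      rw [hseq] at hcolperm
      have : (t.drop i).flatten.length - s = t[i].length := by omega
      rwa [this] at hcolperm
    have hceq := desc_perm_eq t[i] (1 + s) t[i].length
      (hcol _ (List.getElem_mem hi)) hcolperm'
    have hgd : (shapeOf t).getD i 0 = t[i].length := by
      rw [shapeOf, List.getD_eq_getElem _ _ (by simpa using hi), List.getElem_map]
    rcases hlen t[i] (List.getElem_mem hi) with h1 | h2
    · rw [hgd, h1]
      norm_num
      rw [hceq, h1]
      simp [List.range'_succ]
      omega
    · rw [hgd, h2]
      norm_num
      rw [hceq, h2]
      have hr2 : List.range' (1 + s) 2 = [1 + s, 1 + s + 1] := by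
        simp [List.range'_succ]
      rw [hr2]
      simp
      omega
  apply List.ext_getElem
  · simp [cTcols, shapeOf]
  · intro i h1 h2
    rw [hcols i h1]
    simp only [cTcols, List.getElem_map, List.getElem_range]

lemma head?_eq_headD {c : List ℕ} (h : c ≠ []) : c.head? = some (c.headD 0) := by
  cases c <;> simp_all

lemma headD_mem {c : List ℕ} (h : c ≠ []) : c.headD 0 ∈ c := by
  cases c <;> simp_all

lemma botsL_length (t : List (List ℕ)) (hlen : ∀ c ∈ t, c.length = 1 ∨ c.length = 2) :
    (botsL t).length = t.countP (fun c => decide (c.length = 2)) := by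
  induction t with
  | nil => simp [botsL]
  | cons c t ih =>
      have h1 := hlen c (List.mem_cons_self)
      have ih' := ih (fun d hd => hlen d (List.mem_cons_of_mem _ hd))
      rw [botsL, List.flatMap_cons, List.length_append, List.countP_cons]
      rw [botsL] at ih'
      rw [ih', List.length_drop]
      rcases h1 with h | h <;> simp [h] <;> try omega

lemma count2_shape (t : List (List ℕ)) :
    (shapeOf t).count 2 = t.countP (fun c => decide (c.length = 2)) := by
  rw [shapeOf, List.count_eq_countP, List.countP_map]
  apply List.countP_congr
  intro c _
  simp [Function.comp]

lemma mem_flatten_of_getElem_drop {t : List (List ℕ)} {i j : ℕ} (hij : i < j)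
    (hj : j < t.length) {x : ℕ} (hx : x ∈ t[j]) : x ∈ (t.drop (i + 1)).flatten := by
  have hlt : j - (i+1) < (t.drop (i+1)).length := by simp [List.length_drop]; omega
  refine List.mem_flatten.2 ⟨(t.drop (i+1))[j - (i+1)], List.getElem_mem hlt, ?_⟩
  rw [List.getElem_drop]
  have : i + 1 + (j - (i + 1)) = j := by omega
  simp_rw [this]
  exact hx

lemma rT_reconstruct (t : List (List ℕ)) (n : ℕ)
    (hlen : ∀ c ∈ t, c.length = 1 ∨ c.length = 2)
    (hcol : ∀ c ∈ t, List.Chain' (fun a b => b < a) c)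
    (hdom : ∀ i j : ℕ, i < j → j < t.length →
      ∀ a ∈ (t.getD i []).head?, ∀ x ∈ t.getD j [], x < a)
    (hperm : t.flatten.Perm (List.range' 1 n))
    (hBot : ∀ i, (t.getD i []).length = 2 →
      ∀ x ∈ (t.drop (i + 1)).flatten, (t.getD i []).getD 1 0 < x) :
    t = rTcols n (shapeOf t) := by
  have hne : ∀ c ∈ t, c ≠ [] := by
    intro c hc he
    rcases hlen c hc with h | h <;> (subst he; simp at h)
  have hptb := flatten_perm_tops_bots t hne
  set k2 := (botsL t).length with hk2
  set L := t.length with hL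
  -- extract column/bottom structure of members of botsL
  have hbmem : ∀ y ∈ botsL t, ∃ i, ∃ hi : i < t.length,
      t[i].length = 2 ∧ y = t[i].getD 1 0 := by
    intro y hy
    obtain ⟨c, hc, hyc⟩ := List.mem_flatMap.1 hy
    obtain ⟨i, hi, rfl⟩ := List.mem_iff_getElem.1 hc
    refine ⟨i, hi, ?_, ?_⟩
    · rcases hlen _ (List.getElem_mem hi) with h | h
      · obtain ⟨x, hx⟩ := List.length_eq_one_iff.1 h
        rw [hx] at hyc; simp at hyc
      · exact h
    · rcases hlen _ (List.getElem_mem hi) with h | h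
      · obtain ⟨x, hx⟩ := List.length_eq_one_iff.1 h
        rw [hx] at hyc; simp at hyc
      · obtain ⟨b, a, hab⟩ := List.length_eq_two.1 h
        rw [hab] at hyc ⊢
        simp at hyc
        simp [hyc]
  have htmem : ∀ x ∈ topsL t, ∃ j, ∃ hj : j < t.length, x = t[j].headD 0 := by
    intro x hx
    obtain ⟨c, hc, rfl⟩ := List.mem_map.1 hx
    obtain ⟨j, hj, rfl⟩ := List.mem_iff_getElem.1 hc
    exact ⟨j, hj, rfl⟩
  -- all bottoms are smaller than all tops
  have hbt : ∀ y ∈ botsL t, ∀ x ∈ topsL t, y < x := by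
    intro y hy x hx
    obtain ⟨i, hi, hi2, rfl⟩ := hbmem y hy
    obtain ⟨j, hj, rfl⟩ := htmem x hx
    have hgdi : t.getD i [] = t[i] := List.getD_eq_getElem _ _ hi
    have hybot : t[i].getD 1 0 ∈ t[i] := by
      obtain ⟨b, a, hab⟩ := List.length_eq_two.1 hi2
      rw [hab]; simp
    rcases lt_trichotomy i j with hij | hij | hij
    · -- top strictly to the right : use hBot
      have hB := hBot i (by rwa [hgdi])
      rw [hgdi] at hB
      exact hB _ (mem_flatten_of_getElem_drop hij hj (headD_mem (hne _ (List.getElem_mem hj))))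
    · -- same column : use the column chain
      subst hij
      obtain ⟨b, a, hab⟩ := List.length_eq_two.1 hi2
      have := hcol _ (List.getElem_mem hi)
      rw [hab] at this ⊢
      simp only [List.Chain', List.isChain_cons_cons, List.isChain_singleton, and_true] at this
      simpa using this
    · -- top strictly to the left : use hdom
      refine hdom j i hij hi _ ?_ _ (by rwa [hgdi])
      rw [List.getD_eq_getElem _ _ hj, head?_eq_headD (hne _ (List.getElem_mem hj))]
      simp
  have hsp := perm_split' (topsL t) (botsL t) 1 n (hptb.symm.trans hperm) hbt
  obtain ⟨pbots, ptops⟩ := hsp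
  have htlen : (topsL t).length = L := by simp [topsL, hL]
  have hkn : n = k2 + L := by
    have h1 := hperm.length_eq
    have h2 := hptb.length_eq
    rw [List.length_append] at h2
    rw [List.length_range'] at h1
    omega
  have hnk : n - k2 = L := by omega
  rw [hnk] at ptops
  -- sortedness of bottoms
  have hbots_sorted : List.Pairwise (· < ·) (botsL t) := by
    rw [botsL, List.flatMap_def, List.pairwise_flatten]
    constructor
    · intro l hl
      obtain ⟨c, hc, rfl⟩ := List.mem_map.1 hl
      rcases hlen c hc with h | h
      · obtain ⟨x, rfl⟩ := List.length_eq_one_iff.1 h; simp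
      · obtain ⟨b, a, rfl⟩ := List.length_eq_two.1 h
        simp
    · rw [List.pairwise_map, List.pairwise_iff_getElem]
      intro i j hi hj hij x hxd y hyd
      have hi2 : t[i].length = 2 := by
        rcases hlen _ (List.getElem_mem hi) with h | h
        · obtain ⟨z, hz⟩ := List.length_eq_one_iff.1 h
          rw [hz] at hxd; simp at hxd
        · exact h
      have hxbot : x = t[i].getD 1 0 := by
        obtain ⟨b, a, hab⟩ := List.length_eq_two.1 hi2
        rw [hab] at hxd; simp at hxd
        rw [hab]; simp [hxd]
      have hy' : y ∈ t[j] := List.mem_of_mem_drop hyd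
      rw [hxbot]
      have hB := hBot i (by rwa [List.getD_eq_getElem _ _ hi])
      rw [List.getD_eq_getElem _ _ hi] at hB
      exact hB y (mem_flatten_of_getElem_drop hij hj hy')
  -- sortedness of tops
  have htops_sorted : List.Pairwise (fun a b => b < a) (topsL t) := by
    rw [topsL, List.pairwise_map, List.pairwise_iff_getElem]
    intro i j hi hj hij
    exact hdom i j hij hj _
      (by rw [List.getD_eq_getElem _ _ hi, head?_eq_headD (hne _ (List.getElem_mem hi))]
          exact Option.mem_some_iff.mpr rfl)
      _ (by rw [List.getD_eq_getElem _ _ hj]; exact headD_mem (hne _ (List.getElem_mem hj)))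
  have hbots_eq : botsL t = List.range' 1 k2 := asc_perm_eq _ _ _ hbots_sorted pbots
  have htops_eq : topsL t = (List.range' (1 + k2) L).reverse :=
    desc_perm_eq' _ _ _ htops_sorted ptops
  -- reconstruct column by column
  have hkcount : k2 = t.countP (fun c => decide (c.length = 2)) := botsL_length t hlen
  apply List.ext_getElem
  · simp [rTcols, shapeOf, hL]
  · intro i h1 h2
    have hiL : i < L := by rw [hL]; exact h1
    have hrT : (rTcols n (shapeOf t))[i] =
        (if (shapeOf t).getD i 0 = 2 then
          [n - i, ((shapeOf t).take i).count 2 + 1] else [n - i]) := by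
      simp only [rTcols, List.getElem_map, List.getElem_range]
    have hgd : (shapeOf t).getD i 0 = t[i].length := by
      rw [shapeOf, List.getD_eq_getElem _ _ (by simpa using h1), List.getElem_map]
    -- top entry
    have htop : t[i].headD 0 = n - i := by
      have e1 : (topsL t)[i]'(by rw [htlen]; exact hiL) = t[i].headD 0 := by
        simp [topsL]
      have e2 : (topsL t)[i]'(by rw [htlen]; exact hiL) = n - i := by
        rw [List.getElem_of_eq htops_eq]
        rw [List.getElem_reverse]
        rw [List.getElem_range']
        simp only [List.length_range']
        omega
      omega
    rw [hrT]
    rcases hlen _ (List.getElem_mem h1) with hc1 | hc2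
    · rw [hgd, hc1]
      norm_num
      obtain ⟨x, hx⟩ := List.length_eq_one_iff.1 hc1
      rw [hx]
      rw [hx] at htop
      simp at htop
      simp [htop]
    · rw [hgd, hc2]
      norm_num
      -- bottom entry
      set p := (t.take i).countP (fun c => decide (c.length = 2)) with hp
      have hbdecomp : botsL t = botsL (t.take i) ++ (t[i].drop 1 ++ botsL (t.drop (i + 1))) := by
        conv_lhs => rw [botsL, ← List.take_append_drop i t, List.flatMap_append]
        rw [List.drop_eq_getElem_cons h1, List.flatMap_cons]
        rfl
      have hplen : (botsL (t.take i)).length = p :=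
        botsL_length _ (fun c hc => hlen c (List.mem_of_mem_take hc))
      obtain ⟨b, a, hab⟩ := List.length_eq_two.1 hc2
      have hdrop1 : t[i].drop 1 = [a] := by rw [hab]; rfl
      rw [hdrop1] at hbdecomp
      have hplt : p < k2 := by
        rw [hk2, hbdecomp]
        simp [hplen]
      have hbp : (botsL t)[p]'(by rw [← hk2]; exact hplt) = a := by
        rw [List.getElem_of_eq hbdecomp]
        rw [List.getElem_append_right (by rw [hplen])]
        simp [hplen]
      have hbp2 : (botsL t)[p]'(by rw [← hk2]; exact hplt) = 1 + p := by
        rw [List.getElem_of_eq hbots_eq]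
        rw [List.getElem_range']
        omega
      have ha : a = p + 1 := by omega
      have hcount : ((shapeOf t).take i).count 2 = p := by
        rw [shapeOf, ← List.map_take, ← shapeOf, count2_shape]
      rw [hcount, hab]
      rw [hab] at htop
      simp at htop
      rw [htop, ha]



lemma cT_props (u : List ℕ) (hu : ∀ p ∈ u, p = 1 ∨ p = 2) :
    shapeOf (cTcols u) = u ∧
    (∀ c ∈ cTcols u, c.length = 1 ∨ c.length = 2) ∧
    (∀ c ∈ cTcols u, List.Chain' (fun a b => b < a) c) ∧
    (∀ i j, i < j → j < (cTcols u).length →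
      ∀ a ∈ ((cTcols u).getD i []).head?, ∀ x ∈ (cTcols u).getD j [], x < a) ∧
    (cTcols u).flatten.Perm (List.range' 1 u.sum) ∧
    goL (minWord (cTcols u)) = u.count 2 := by
  induction u with
  | nil =>
      refine ⟨rfl, by simp [cTcols], by simp [cTcols], ?_, by simp [cTcols], by simp [cTcols, minWord, goL]⟩
      intro i j hij hj
      simp [cTcols] at hj
  | cons h u ih =>
      have hu' : ∀ p ∈ u, p = 1 ∨ p = 2 := fun p hp => hu p (List.mem_cons_of_mem _ hp)
      have hh := hu h (List.mem_cons_self)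
      obtain ⟨ihshape, ihlen, ihcol, ihdom, ihperm, ihgo⟩ := ih hu'
      set m := u.sum with hm
      set c0 := (if h = 2 then [m + 2, m + 1] else [m + 1]) with hc0
      have hcons : cTcols (h :: u) = c0 :: cTcols u := cT_cons h u
      have hc0len : c0.length = h := by
        rcases hh with h1 | h1 <;> simp [hc0, h1]
      have hmem_le : ∀ x ∈ (cTcols u).flatten, 1 ≤ x ∧ x ≤ m := by
        intro x hx
        have := ihperm.mem_iff.1 hx
        rw [List.mem_range'_1] at this
        omega
      have hc0mem : ∀ y ∈ c0, m + 1 ≤ y := by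
        intro y hy
        rcases hh with h1 | h1 <;> rw [hc0] at hy <;> simp [h1] at hy <;> omega
      have hsum : (h :: u).sum = h + m := by rw [List.sum_cons]
      refine ⟨?_, ?_, ?_, ?_, ?_, ?_⟩
      · rw [hcons]
        show c0.length :: shapeOf (cTcols u) = h :: u
        rw [hc0len, ihshape]
      · rw [hcons]
        intro c hc
        rcases List.mem_cons.1 hc with rfl | hc'
        · rcases hh with h1 | h1 <;> simp [hc0, h1]
        · exact ihlen c hc'
      · rw [hcons]
        intro c hc
        rcases List.mem_cons.1 hc with rfl | hc'
        · rcases hh with h1 | h1 <;> simp [hc0, h1, List.Chain'] <;> omega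
        · exact ihcol c hc'
      · rw [hcons]
        intro i j hij hj a ha x hx
        match i, j with
        | 0, j + 1 =>
            rw [List.getD_cons_zero] at ha
            rw [List.getD_cons_succ] at hx
            have hxm : x ≤ m := (hmem_le x (mem_getD_flatten hx)).2
            have ham : m + 1 ≤ a := hc0mem a (List.mem_of_mem_head? ha)
            omega
        | i + 1, j + 1 =>
            rw [List.getD_cons_succ] at ha hx
            exact ihdom i j (by omega) (by simpa using hj) a ha x hx
      · rw [hcons, List.flatten_cons, hsum]
        have hr : List.range' 1 (h + m) = List.range' 1 m ++ List.range' (1 + m) h := by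
          have e := (List.range'_append (s := 1) (m := m) (n := h) (step := 1)).symm
          rw [Nat.add_comm h m]; simpa only [one_mul] using e
        rw [hr]
        have hc0p : c0.Perm (List.range' (1 + m) h) := by
          rcases hh with h1 | h1
          · have e : List.range' (1 + m) 1 = [m + 1] := by
              simp [List.range'_succ, Nat.add_comm]
            rw [hc0, h1, e]
            norm_num
          · have e : List.range' (1 + m) 2 = [m + 1, m + 2] := by
              simp [List.range'_succ]
              omega
            rw [hc0, h1, e]
            norm_num
            exact List.Perm.swap _ _ _
        exact ((ihperm.append_left c0).trans List.perm_append_comm).trans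
          (hc0p.append_left _)
      · rw [hcons, minWord_cons, goL_append]
        have hz : crossN (minWord (cTcols u)) c0 = 0 := by
          rw [crossN_eq_zero_iff]
          intro x hx y hy
          have h1 := hmem_le x (mem_minWord.1 hx)
          have h2 := hc0mem y hy
          omega
        have hgc0 : goL c0 = if h = 2 then 1 else 0 := by
          rcases hh with h1 | h1 <;> simp [hc0, h1, goL]
        have hcnt : (h :: u).count 2 = u.count 2 + if h = 2 then 1 else 0 := by
          rw [List.count_cons]
          rcases hh with h1 | h1 <;> simp [h1]
        rw [hz, hgc0, ihgo, hcnt]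
        omega

lemma len_le_sum (u : List ℕ) (hu : ∀ p ∈ u, p = 1 ∨ p = 2) : u.length ≤ u.sum := by
  induction u with
  | nil => simp
  | cons h u ih =>
      have := ih (fun p hp => hu p (List.mem_cons_of_mem _ hp))
      have hh := hu h (List.mem_cons_self)
      simp only [List.length_cons, List.sum_cons]
      omega

lemma minWord_map_add (t : List (List ℕ)) :
    minWord (t.map (List.map (· + 1))) = (minWord t).map (· + 1) := by
  rw [minWord, minWord, ← List.map_reverse, ← List.map_flatten]

lemma rT_props (u : List ℕ) (hu : ∀ p ∈ u, p = 1 ∨ p = 2) :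
    shapeOf (rTcols u.sum u) = u ∧
    (∀ c ∈ rTcols u.sum u, c.length = 1 ∨ c.length = 2) ∧
    (∀ c ∈ rTcols u.sum u, List.Chain' (fun a b => b < a) c) ∧
    (∀ i j, i < j → j < (rTcols u.sum u).length →
      ∀ a ∈ ((rTcols u.sum u).getD i []).head?, ∀ x ∈ (rTcols u.sum u).getD j [], x < a) ∧
    (rTcols u.sum u).flatten.Perm (List.range' 1 u.sum) ∧
    goL (minWord (rTcols u.sum u)) = Fshape u := by
  induction u with
  | nil =>
      refine ⟨rfl, by simp [rTcols], by simp [rTcols], ?_, by simp [rTcols],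
        by simp [rTcols, minWord, goL, Fshape]⟩
      intro i j hij hj
      simp [rTcols] at hj
  | cons h u ih =>
      have hu' : ∀ p ∈ u, p = 1 ∨ p = 2 := fun p hp => hu p (List.mem_cons_of_mem _ hp)
      have hh := hu h (List.mem_cons_self)
      obtain ⟨ihshape, ihlen, ihcol, ihdom, ihperm, ihgo⟩ := ih hu'
      set m := u.sum with hm
      have hmem_le : ∀ x ∈ (rTcols m u).flatten, 1 ≤ x ∧ x ≤ m := by
        intro x hx
        have := ihperm.mem_iff.1 hx
        rw [List.mem_range'_1] at this
        omega
      rcases hh with h1 | h1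
      · -- h = 1
        subst h1
        have hsum : (1 :: u).sum = m + 1 := by rw [List.sum_cons]; omega
        rw [hsum]
        have hcons : rTcols (m + 1) (1 :: u) = [m + 1] :: rTcols m u := rT_cons1 u
        rw [hcons]
        refine ⟨?_, ?_, ?_, ?_, ?_, ?_⟩
        · show 1 :: shapeOf (rTcols m u) = 1 :: u
          rw [ihshape]
        · intro c hc
          rcases List.mem_cons.1 hc with rfl | hc'
          · left; rfl
          · exact ihlen c hc'
        · intro c hc
          rcases List.mem_cons.1 hc with rfl | hc'
          · simp [List.Chain']
          · exact ihcol c hc'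
        · intro i j hij hj a ha x hx
          match i, j with
          | 0, j + 1 =>
              rw [List.getD_cons_zero] at ha
              rw [List.getD_cons_succ] at hx
              simp only [List.head?_cons, Option.mem_some_iff] at ha
              have hxm : x ≤ m := (hmem_le x (mem_getD_flatten hx)).2
              omega
          | i + 1, j + 1 =>
              rw [List.getD_cons_succ] at ha hx
              exact ihdom i j (by omega) (by simpa using hj) a ha x hx
        · rw [List.flatten_cons]
          have hr : List.range' 1 (m + 1) = List.range' 1 m ++ [1 + m] := by
            have e := (List.range'_append (s := 1) (m := m) (n := 1) (step := 1)).symm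
            simp only [one_mul, List.range'_one] at e
            exact e
          rw [hr]
          have h2 : ([m + 1] ++ (rTcols m u).flatten).Perm ((rTcols m u).flatten ++ [m + 1]) :=
            List.perm_append_comm
          refine h2.trans ?_
          have : [(1 : ℕ) + m] = [m + 1] := by rw [Nat.add_comm]
          rw [this]
          exact ihperm.append_right _
        · rw [minWord_cons, goL_append, Fshape_cons1]
          have hz : crossN (minWord (rTcols m u)) [m + 1] = 0 := by
            rw [crossN_eq_zero_iff]
            intro x hx y hy
            have h1 := hmem_le x (mem_minWord.1 hx)
            rcases List.mem_singleton.1 hy with rfl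
            omega
          rw [hz, ihgo]
          simp [goL]
      · -- h = 2
        subst h1
        have hsum : (2 :: u).sum = m + 2 := by rw [List.sum_cons]; omega
        rw [hsum]
        have hcons : rTcols (m + 2) (2 :: u) =
            [m + 2, 1] :: (rTcols m u).map (List.map (· + 1)) :=
          rT_cons2 u (len_le_sum u hu')
        rw [hcons]
        set M := (rTcols m u).map (List.map (· + 1)) with hM
        have hmem_le' : ∀ x ∈ M.flatten, 2 ≤ x ∧ x ≤ m + 1 := by
          intro x hx
          rw [hM, ← List.map_flatten] at hx
          obtain ⟨y, hy, rfl⟩ := List.mem_map.1 hx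
          have := hmem_le y hy
          omega
        refine ⟨?_, ?_, ?_, ?_, ?_, ?_⟩
        · show 2 :: shapeOf M = 2 :: u
          congr 1
          rw [hM, shapeOf, List.map_map]
          have e : (List.length ∘ List.map fun x : ℕ => x + 1) = List.length := by
            funext c; simp
          rw [e, ← shapeOf, ihshape]
        · intro c hc
          rcases List.mem_cons.1 hc with rfl | hc'
          · right; rfl
          · rw [hM] at hc'
            obtain ⟨d, hd, rfl⟩ := List.mem_map.1 hc'
            rcases ihlen d hd with h | h
            · left; simpa using h
            · right; simpa using h
        · intro c hc
          rcases List.mem_cons.1 hc with rfl | hc'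
          · simp [List.Chain']
          · rw [hM] at hc'
            obtain ⟨d, hd, rfl⟩ := List.mem_map.1 hc'
            have := ihcol d hd
            rw [List.Chain', List.isChain_map]
            exact List.IsChain.imp (fun a b hab => by omega) this
        · intro i j hij hj a ha x hx
          match i, j with
          | 0, j + 1 =>
              rw [List.getD_cons_zero] at ha
              rw [List.getD_cons_succ] at hx
              simp only [List.head?_cons, Option.mem_some_iff] at ha
              have hxm : x ≤ m + 1 := (hmem_le' x (mem_getD_flatten hx)).2
              omega
          | i + 1, j + 1 =>
              rw [List.getD_cons_succ] at ha hx
              rw [hM, getD_map_col _ rfl] at ha hx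
              obtain ⟨y, hy, rfl⟩ := List.mem_map.1 hx
              have hha : ∃ b ∈ ((rTcols m u).getD i []).head?, a = b + 1 := by
                cases hgd : (rTcols m u).getD i [] with
                | nil => rw [hgd] at ha; simp at ha
                | cons z zs =>
                    rw [hgd] at ha
                    simp at ha
                    exact ⟨z, by simp, ha.symm⟩
              obtain ⟨b, hb, rfl⟩ := hha
              have := ihdom i j (by omega) (by
                rw [hM] at hj
                simpa using hj) b hb y hy
              omega
        · rw [List.flatten_cons]
          have hMperm : M.flatten.Perm (List.range' 2 m) := by
            rw [hM, ← List.map_flatten]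
            have := ihperm.map (· + 1)
            rwa [map_add_range'] at this
          have hr : List.range' 1 (m + 2) = 1 :: (List.range' 2 m ++ [2 + m]) := by
            have e := (List.range'_append (s := 2) (m := m) (n := 1) (step := 1)).symm
            simp only [one_mul, List.range'_one] at e
            rw [List.range'_succ]; exact congrArg (1 :: ·) e
          rw [hr]
          have e2 : [2 + m] = [m + 2] := by rw [Nat.add_comm]
          rw [e2]
          have s1 : ((m + 2) :: 1 :: M.flatten).Perm (1 :: (m + 2) :: M.flatten) :=
            List.Perm.swap _ _ _
          have s2 : ((m + 2) :: M.flatten).Perm ((m + 2) :: List.range' 2 m) :=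
            hMperm.cons _
          have s3 : ((m + 2) :: List.range' 2 m).Perm (List.range' 2 m ++ [m + 2]) := by
            have := List.perm_append_comm (l₁ := [m + 2]) (l₂ := List.range' 2 m)
            simpa using this
          exact s1.trans ((s2.trans s3).cons 1)
        · rw [minWord_cons, goL_append, Fshape_cons2]
          have hw : minWord M = (minWord (rTcols m u)).map (· + 1) := by
            rw [hM, minWord_map_add]
          have hgoM : goL (minWord M) = Fshape u := by rw [hw, goL_map_add, ihgo]
          have hcross : crossN (minWord M) [m + 2, 1] = (minWord (rTcols m u)).length := by
            rw [hw, crossN, List.map_map]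
            have hcongr : ∀ y ∈ minWord (rTcols m u),
                ((fun x => List.countP (fun z => decide (z < x)) [m + 2, 1]) ∘ (· + 1)) y
                  = 1 := by
              intro y hy
              have hb := hmem_le y (mem_minWord.1 hy)
              simp only [Function.comp_apply, List.countP_cons, List.countP_nil,
                decide_eq_true_eq]
              have e1 : ¬ (m + 2 < y + 1) := by omega
              have e2 : 1 < y + 1 := by omega
              simp [e1, e2]
            rw [List.map_congr_left hcongr]
            simp
          have hlen2 : (minWord (rTcols m u)).length = m := by
            rw [len_minWord, ihshape]
          have hgoc : goL [m + 2, 1] = 1 := by simp [goL]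
          rw [hgoM, hcross, hlen2, hgoc]

/-- among standard Young–Fibonacci tableaux of shape `u`, the column
canonical tableau is the unique one of minimal rank `ρ(t) = inv(min(t))` and the
row canonical tableau is the unique one of maximal rank; moreover `ρ(cT_u)` is the
number of parts of `u` equal to `2` and `ρ(rT_u)` is the stated sum over cells. -/
theorem canonical_tableaux_extremal_ranks (n : ℕ) (u : List ℕ)
    (hu : IsSnakeshape u) (hsum : u.sum = n) :
    IsYFT n (cTcols u) ∧ shapeOf (cTcols u) = u ∧
    IsYFT n (rTcols n u) ∧ shapeOf (rTcols n u) = u ∧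
    (∀ t : List (List ℕ), IsYFT n t → shapeOf t = u → t ≠ cTcols u →
      invCount (minWord (cTcols u)) < invCount (minWord t)) ∧
    (∀ t : List (List ℕ), IsYFT n t → shapeOf t = u → t ≠ rTcols n u →
      invCount (minWord t) < invCount (minWord (rTcols n u))) ∧
    invCount (minWord (cTcols u)) = u.count 2 ∧
    invCount (minWord (rTcols n u)) =
      ((List.range u.length).map (fun i =>
        (u.take i).count 2 * u.getD i 0 +
          if u.getD i 0 = 2 then 1 else 0)).sum := by
  subst hsum
  obtain ⟨cSh, cLen, cCol, cDom, cPerm, cGo⟩ := cT_props u hu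
  obtain ⟨rSh, rLen, rCol, rDom, rPerm, rGo⟩ := rT_props u hu
  have hcYFT : IsYFT u.sum (cTcols u) := ⟨cLen, cCol, cDom, cPerm⟩
  have hrYFT : IsYFT u.sum (rTcols u.sum u) := ⟨rLen, rCol, rDom, rPerm⟩
  refine ⟨hcYFT, cSh, hrYFT, rSh, ?_, ?_, ?_, ?_⟩
  · intro t hYFT hsh hne
    obtain ⟨hlen, hcol, hdom, hperm⟩ := hYFT
    rw [invCount_eq_goL, invCount_eq_goL, cGo]
    have hcnt : t.countP (fun c => decide (c.length = 2)) = u.count 2 := by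
      rw [← count2_shape, hsh]
    obtain ⟨h1, h2⟩ := min_main t hlen hcol
    rw [hcnt] at h1 h2
    rcases lt_or_eq_of_le h1 with h | h
    · exact h
    · exfalso
      apply hne
      have := cT_reconstruct t u.sum hlen hcol hperm (h2 h.symm)
      rwa [hsh] at this
  · intro t hYFT hsh hne
    obtain ⟨hlen, hcol, hdom, hperm⟩ := hYFT
    rw [invCount_eq_goL, invCount_eq_goL, rGo]
    have hF : Fshape (shapeOf t) = Fshape u := by rw [hsh]
    obtain ⟨h1, h2⟩ := max_main t hlen hcol hdom
    rw [hF] at h1 h2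
    rcases lt_or_eq_of_le h1 with h | h
    · exact h
    · exfalso
      apply hne
      have := rT_reconstruct t u.sum hlen hcol hdom hperm (h2 h)
      rwa [hsh] at this
  · rw [invCount_eq_goL, cGo]
  · rw [invCount_eq_goL, rGo]
    rfl
end

section
/- Let σ be a permutation of {1,…,n}, and for 0 ≤ k ≤ n let σ_{/[1..k]} denote the permutation of {1,…,k} obtained from the word σ(1)⋯σ(n) by deleting all letters greater than k. Then the sequence u⁰, u¹, …, uⁿ, where u^k is the shape of the Young-Fibonacci insertion tableau P(σ_{/[1..k]}), is a saturated chain in the Young-Fibonacci lattice from the empty snakeshape to the shape of P(σ); in particular, for each k the shape of P(σ_{/[1..k+1]}) covers the shape of P(σ_{/[1..k]}). -/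
namespace YFsat

lemma max?_spec {l : List ℕ} {a : ℕ} (h : l.max? = some a) : a ∈ l ∧ ∀ b ∈ l, b ≤ a := by
  rw [List.max?_eq_some_iff] at h
  exact h

lemma getLast!_concat (w : List ℕ) (x : ℕ) : (w ++ [x]).getLast! = x :=
  List.getLast!_of_getLast? List.getLast?_concat

lemma aux_nil (f : ℕ) : insertColsAux f [] = [] := by cases f <;> rfl

lemma aux_succ_ne (f : ℕ) (w : List ℕ) (hw : w ≠ []) :
    insertColsAux (f+1) w =
      match ((w.dropLast).filter (fun y => decide (w.getLast! < y))).max? with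
      | none => [w.getLast!] :: insertColsAux f w.dropLast
      | some m => [m, w.getLast!] :: insertColsAux f (w.dropLast.erase m) := by
  cases w with
  | nil => exact absurd rfl hw
  | cons a l => rfl

lemma aux_eq2 : ∀ (f1 f2 : ℕ) (w : List ℕ), w.length ≤ f1 → w.length ≤ f2 →
    insertColsAux f1 w = insertColsAux f2 w := by
  intro f1
  induction f1 with
  | zero =>
    intro f2 w h1 _
    rw [List.length_eq_zero_iff.mp (Nat.le_zero.mp h1)]
    rw [aux_nil, aux_nil]
  | succ N ih =>
    intro f2 w h1 h2
    rcases w.eq_nil_or_concat with rfl | ⟨w₀, x, rfl⟩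
    · rw [aux_nil, aux_nil]
    · rw [List.concat_eq_append] at *
      obtain ⟨g, rfl⟩ : ∃ g, f2 = g + 1 := by
        cases f2
        · simp at h2
        · exact ⟨_, rfl⟩
      rw [aux_succ_ne N _ (by simp), aux_succ_ne g _ (by simp)]
      rw [List.dropLast_concat, getLast!_concat]
      have hw₀ : w₀.length ≤ N ∧ w₀.length ≤ g := by
        simp at h1 h2; omega
      cases hm : (w₀.filter (fun y => decide (x < y))).max? with
      | none =>
        show [x] :: insertColsAux N w₀ = [x] :: insertColsAux g w₀
        rw [ih g w₀ hw₀.1 hw₀.2]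
      | some m =>
        have hlen := (show (w₀.erase m).Sublist w₀ from w₀.erase_sublist).length_le
        show [m, x] :: insertColsAux N (w₀.erase m) = [m, x] :: insertColsAux g (w₀.erase m)
        rw [ih g _ (le_trans hlen hw₀.1) (le_trans hlen hw₀.2)]

lemma insertCols_concat (w : List ℕ) (x : ℕ) :
    insertCols (w ++ [x]) =
      match (w.filter (fun y => decide (x < y))).max? with
      | none => [x] :: insertCols w
      | some m => [m, x] :: insertCols (w.erase m) := by
  have h1 : (w ++ [x]).length = w.length + 1 := by simp
  rw [insertCols, h1, aux_succ_ne _ _ (by simp), List.dropLast_concat, getLast!_concat]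
  cases hm : (w.filter (fun y => decide (x < y))).max? with
  | none => rfl
  | some m =>
    show [m, x] :: insertColsAux w.length (w.erase m) = [m, x] :: insertCols (w.erase m)
    rw [insertCols, aux_eq2 w.length (w.erase m).length (w.erase m)
      (show (w.erase m).Sublist w from w.erase_sublist).length_le le_rfl]

lemma shapeOf_cons (c : List ℕ) (t : List (List ℕ)) :
    shapeOf (c :: t) = c.length :: shapeOf t := rfl

lemma mem_coversList_one (u : List ℕ) : (1 :: u) ∈ coversList u := by
  simp [coversList]

lemma mem_coversList_two (s : List ℕ) : (2 :: s) ∈ coversList (1 :: s) := by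
  simp [coversList, List.takeWhile_cons]

lemma takeWhile_two (B : List ℕ) :
    (2 :: B).takeWhile (fun p => decide (p = 2)) =
      2 :: B.takeWhile (fun p => decide (p = 2)) := by
  simp [List.takeWhile_cons]

lemma cons2 (A B : List ℕ) (h : A ∈ coversList B) : (2 :: A) ∈ coversList (2 :: B) := by
  rw [coversList, List.mem_append, List.mem_append] at h
  rw [coversList, List.mem_append, List.mem_append, takeWhile_two]
  rcases h with (h | h) | h
  · -- A = 1 :: B
    simp only [List.mem_singleton] at h
    subst h
    right
    simp only [List.mem_map, List.mem_range, List.length_cons]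
    exact ⟨0, by omega, by simp [List.insertIdx_succ_cons]⟩
  · -- middle case
    split_ifs at h with hc
    · simp only [List.mem_singleton] at h
      subst h
      left; right
      rw [if_pos (by simp only [List.length_cons]; omega)]
      simp only [List.length_cons, List.mem_singleton, List.take_succ_cons,
        List.drop_succ_cons, List.cons_append]
    · simp at h
  · simp only [List.mem_map, List.mem_range] at h
    obtain ⟨i, hi, rfl⟩ := h
    right
    simp only [List.mem_map, List.mem_range, List.length_cons]
    exact ⟨i + 1, by omega, by simp [List.insertIdx_succ_cons]⟩

lemma key : ∀ (N : ℕ) (v : List ℕ), v.length ≤ N → v.Nodup → ∀ m ∈ v, (∀ y ∈ v, y ≤ m) →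
    shapeOf (insertCols v) ∈ coversList (shapeOf (insertCols (v.erase m))) := by
  intro N
  induction N with
  | zero =>
    intro v hv _ m hm _
    rw [List.length_eq_zero_iff.mp (Nat.le_zero.mp hv)] at hm
    cases hm
  | succ N ih =>
    intro v hv hnd m hm hmax
    rcases v.eq_nil_or_concat with rfl | ⟨v₀, x, rfl⟩
    · cases hm
    · rw [List.concat_eq_append] at *
      have hnd' := List.nodup_append.mp hnd
      have hv₀nd : v₀.Nodup := hnd'.1
      by_cases hx : x = m
      · -- the max is the last letter
        subst hx
        have hxnot : x ∉ v₀ := fun hc => hnd'.2.2 x hc x (by simp) rfl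
        have herase : (v₀ ++ [x]).erase x = v₀ := by
          rw [List.erase_append_right _ hxnot]; simp
        have hfil : v₀.filter (fun y => decide (x < y)) = [] := by
          rw [List.filter_eq_nil_iff]
          intro y hy
          have : y ≤ x := hmax y (List.mem_append_left _ hy)
          simp; omega
        rw [herase, insertCols_concat, hfil]
        simp only [List.max?_nil]
        rw [shapeOf_cons]
        exact mem_coversList_one _
      · -- the max is inside v₀
        have hmv₀ : m ∈ v₀ := by
          rcases List.mem_append.mp hm with h | h
          · exact h
          · simp at h; exact absurd h.symm hx
        have hxm : x < m := lt_of_le_of_ne (hmax x (by simp)) hx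
        have hmf : m ∈ v₀.filter (fun y => decide (x < y)) :=
          List.mem_filter.mpr ⟨hmv₀, by simpa using hxm⟩
        obtain ⟨m', hm'⟩ : ∃ m', (v₀.filter (fun y => decide (x < y))).max? = some m' := by
          cases hc : (v₀.filter (fun y => decide (x < y))).max? with
          | none =>
            rw [List.max?_eq_none_iff] at hc
            rw [hc] at hmf; cases hmf
          | some m' => exact ⟨m', rfl⟩
        obtain ⟨hm'mem, hm'max⟩ := max?_spec hm'
        have hm'eq : m' = m :=
          le_antisymm (hmax m' (List.mem_append_left _ (List.mem_of_mem_filter hm'mem)))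
            (hm'max m hmf)
        subst hm'eq
        have herase : (v₀ ++ [x]).erase m' = v₀.erase m' ++ [x] :=
          List.erase_append_left _ hmv₀
        set u := v₀.erase m' with hu
        rw [herase, insertCols_concat v₀ x, hm', insertCols_concat u x]
        cases hm₂ : (u.filter (fun y => decide (x < y))).max? with
        | none =>
          rw [shapeOf_cons, shapeOf_cons]
          exact mem_coversList_two _
        | some m₂ =>
          obtain ⟨hm₂mem, hm₂max⟩ := max?_spec hm₂
          have hm₂u : m₂ ∈ u := List.mem_of_mem_filter hm₂mem
          have hxm₂ : x < m₂ := by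
            have := List.mem_filter.mp hm₂mem
            simpa using this.2
          have hm₂ismax : ∀ y ∈ u, y ≤ m₂ := by
            intro y hy
            by_cases hxy : x < y
            · exact hm₂max y (List.mem_filter.mpr ⟨hy, by simpa using hxy⟩)
            · omega
          have hulen : u.length ≤ N := by
            have h1 : u.length ≤ v₀.length := (show (v₀.erase m').Sublist v₀ from v₀.erase_sublist).length_le
            have h2 : v₀.length + 1 ≤ N + 1 := by simpa using hv
            omega
          have := ih u hulen (hv₀nd.erase m') m₂ hm₂u hm₂ismax
          rw [shapeOf_cons, shapeOf_cons]
          exact cons2 _ _ this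

end YFsat
/-- the shapes of the insertion tableaux of the restrictions
`σ_{/[1..k]}` form a saturated chain in the Young–Fibonacci lattice from the
empty snakeshape to the shape of `P(σ)`. -/
theorem restriction_shapes_form_saturated_chain (n : ℕ) (σ : Equiv.Perm (Fin n)) :
    shapeOf (insertCols ((permWord σ).filter (fun x => decide (x ≤ 0)))) = [] ∧
    shapeOf (insertCols ((permWord σ).filter (fun x => decide (x ≤ n)))) =
      shapeOf (insertCols (permWord σ)) ∧
    ∀ k : ℕ, k < n →
      shapeOf (insertCols ((permWord σ).filter (fun x => decide (x ≤ k + 1)))) ∈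
        coversList
          (shapeOf (insertCols ((permWord σ).filter (fun x => decide (x ≤ k))))) := by
  have hnd : (permWord σ).Nodup := by
    rw [permWord, List.nodup_ofFn]
    intro i j hij
    simp only [add_left_inj] at hij
    exact σ.injective (Fin.val_injective hij)
  refine ⟨?_, ?_, ?_⟩
  · have h0 : (permWord σ).filter (fun x => decide (x ≤ 0)) = [] := by
      rw [List.filter_eq_nil_iff]
      intro a ha
      rw [permWord, List.mem_ofFn] at ha
      obtain ⟨i, rfl⟩ := ha
      simp
    rw [h0]; rfl
  · have h1 : (permWord σ).filter (fun x => decide (x ≤ n)) = permWord σ := by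
      rw [List.filter_eq_self]
      intro a ha
      rw [permWord, List.mem_ofFn] at ha
      obtain ⟨i, rfl⟩ := ha
      simpa using Nat.succ_le_of_lt (σ i).isLt
    rw [h1]
  · intro k hk
    set v := (permWord σ).filter (fun x => decide (x ≤ k + 1)) with hv
    have hvnd : v.Nodup := hnd.filter _
    have hmem : k + 1 ∈ v := by
      rw [hv, List.mem_filter]
      refine ⟨?_, by simp⟩
      rw [permWord, List.mem_ofFn]
      exact ⟨σ.symm ⟨k, hk⟩, by simp⟩
    have hmax : ∀ y ∈ v, y ≤ k + 1 := by
      intro y hy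
      rw [hv, List.mem_filter] at hy
      simpa using hy.2
    have herase : v.erase (k + 1) = (permWord σ).filter (fun x => decide (x ≤ k)) := by
      rw [hvnd.erase_eq_filter, hv, List.filter_filter]
      apply List.filter_congr
      intro x _
      rw [Bool.eq_iff_iff]
      simp only [Bool.and_eq_true, decide_eq_true_eq, bne_iff_ne, ne_eq]
      omega
    rw [← herase]
    exact YFsat.key v.length v le_rfl hvnd (k + 1) hmem hmax
end
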